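/- arXiv:math/0607451 — 5 statements merged into one kernel-verified Lean document; each statement's English description precedes it below -/
import Mathlib

section
/- Suppose λ ⊳ μ are partitions with λ strictly dominating μ, |λ| = |μ| = n, and [μ] \ r^μ_y = [λ] \ r^λ_x for rim hooks r^λ_x of λ and r^μ_y of μ (i.e., μ is obtained from λ by unwrapping one rim hook and wrapping it back on elsewhere). If the foot residues (mod e) of r^λ_x and r^μ_y differ, then there is exactly one other pair of rim hooks (r^λ_{x'}, r^μ_{y'}) with [λ]\r^λ_{x'} = [μ]\r^μ_{y'}, and leg(r^λ_x) + leg(r^μ_y) and leg(r^λ_{x'}) + leg(r^μ_{y'}) have opposite parities. -/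
noncomputable section

/-- A partition: a weakly decreasing sequence of natural numbers with finite support.
Rows and columns are indexed from `0`. -/
structure Partition' where
  parts : ℕ → ℕ
  antitone : ∀ ⦃i j : ℕ⦄, i ≤ j → parts j ≤ parts i
  finite_support : ∃ N, ∀ i, N ≤ i → parts i = 0

namespace Partition'

/-- The Young diagram of a partition: cells `(i, j)` with `j < λ_i` (0-indexed). -/
def cells (p : Partition') : Set (ℕ × ℕ) := {x | x.2 < p.parts x.1}

/-- The size `|λ|` of a partition. -/
def size (p : Partition') : ℕ := p.cells.ncard

/-- Two cells are adjacent if they share an edge. -/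
def adjacent (a b : ℕ × ℕ) : Prop :=
  (a.1 = b.1 ∧ (a.2 + 1 = b.2 ∨ b.2 + 1 = a.2)) ∨
  (a.2 = b.2 ∧ (a.1 + 1 = b.1 ∨ b.1 + 1 = a.1))

/-- A set of cells is (edge-)connected. -/
def ConnectedSet (S : Set (ℕ × ℕ)) : Prop :=
  ∀ a ∈ S, ∀ b ∈ S, ∃ (n : ℕ) (f : ℕ → ℕ × ℕ),
    f 0 = a ∧ f n = b ∧ (∀ k < n, adjacent (f k) (f (k + 1))) ∧ (∀ k ≤ n, f k ∈ S)

/-- A set of cells contains no 2×2 square. -/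
def No2x2 (S : Set (ℕ × ℕ)) : Prop :=
  ∀ i j : ℕ, ¬ ((i, j) ∈ S ∧ (i + 1, j) ∈ S ∧ (i, j + 1) ∈ S ∧ (i + 1, j + 1) ∈ S)

/-- `AddRimHook p q h` : the partition `q` is obtained from `p` by wrapping on
(a connected skew shape of size `h` containing no 2×2 square, i.e.) a rim hook of length `h`. -/
def AddRimHook (p q : Partition') (h : ℕ) : Prop :=
  p.cells ⊆ q.cells ∧ (q.cells \ p.cells).ncard = h ∧
    ConnectedSet (q.cells \ p.cells) ∧ No2x2 (q.cells \ p.cells)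

/-- The length `λ'_j` of column `j` (0-indexed) of a partition. -/
def colLen (p : Partition') (j : ℕ) : ℕ := {i : ℕ | (i, j) ∈ p.cells}.ncard

/-- The rim hook `r^λ_x` attached to the node `x = (i,j)` of `λ`. -/
def rimHook (p : Partition') (i j : ℕ) : Set (ℕ × ℕ) :=
  {y ∈ p.cells | i ≤ y.1 ∧ j ≤ y.2 ∧ (y.1 + 1, y.2 + 1) ∉ p.cells}

/-- The leg length of the rim hook `r^λ_{(i,j)}`. -/
def legLength (p : Partition') (i j : ℕ) : ℕ := p.colLen j - 1 - i

/-- The hook length `h^λ_{(i,j)}` of the node `(i,j) ∈ [λ]` (0-indexed). -/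
def hookLen (p : Partition') (i j : ℕ) : ℕ := p.parts i + p.colLen j - i - j - 1

/-- The residue mod `e` of the foot node of a rim hook `r^λ_{(i,j)}`; the foot node is
`(λ'_j - 1, j)` (0-indexed), so its residue is `j - λ'_j + 1 = (j+1) - λ'_j` mod `e`. -/
def footRes (e : ℕ) (p : Partition') (j : ℕ) : ZMod e :=
  (((j : ℤ) + 1 - p.colLen j : ℤ) : ZMod e)

/-- `C_f(λ)` : the number of nodes of `λ` with residue `f` mod `e`, using charge `c`
(the residue of node `(i,j)` (0-indexed) is `j - i + c` mod `e`). -/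
def resCount (e : ℕ) (c : ℤ) (p : Partition') (f : ZMod e) : ℕ :=
  {x ∈ p.cells | (((x.2 : ℤ) - x.1 + c : ℤ) : ZMod e) = f}.ncard

/-- The set of β-numbers of `p` with charge `c` : `β_i = λ_i - i + c` (1-indexed rows). -/
def betaSet (p : Partition') (c : ℤ) : Set ℤ :=
  {z | ∃ i : ℕ, z = (p.parts i : ℤ) - (i + 1) + c}

/-- The dominance order on partitions. -/
def Dominates (p q : Partition') : Prop :=
  ∀ m : ℕ, ∑ i ∈ Finset.range m, q.parts i ≤ ∑ i ∈ Finset.range m, p.parts i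

end Partition'

namespace RimAux
open Partition'

/-- `df p a = p.parts a - a` over `ℤ`; strictly decreasing. -/
def df (p : Partition') (a : ℕ) : ℤ := (p.parts a : ℤ) - a

lemma df_strictAnti (p : Partition') : StrictAnti (df p) := by
  apply strictAnti_nat_of_succ_lt
  intro a
  have h := p.antitone (show a ≤ a+1 by omega)
  unfold df; push_cast; omega

lemma df_inj (p : Partition') : Function.Injective (df p) :=
  (df_strictAnti p).injective

/-- β-set. -/
def D (p : Partition') : Set ℤ := Set.range (df p)

lemma exists_foot (p : Partition') (j : ℕ) : ∃ a, p.parts (a + 1) ≤ j := by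
  obtain ⟨N, hN⟩ := p.finite_support
  exact ⟨N, by rw [hN (N+1) (Nat.le_succ N)]; exact Nat.zero_le _⟩

/-- foot row of column `j` (valid when column `j` is nonempty). -/
def ft (p : Partition') (j : ℕ) : ℕ := Nat.find (exists_foot p j)

lemma ft_le (p : Partition') (j : ℕ) : p.parts (ft p j + 1) ≤ j :=
  Nat.find_spec (exists_foot p j)

lemma ft_gt {p : Partition'} {i j : ℕ} (h : j < p.parts i) : j < p.parts (ft p j) := by
  rcases Nat.eq_zero_or_pos (ft p j) with h0 | h0
  · rw [h0]; exact lt_of_lt_of_le h (p.antitone (Nat.zero_le i))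
  · have h2 := Nat.find_min (exists_foot p j) (show ft p j - 1 < ft p j by omega)
    have h1 : ft p j - 1 + 1 = ft p j := Nat.succ_pred_eq_of_pos h0
    rw [h1] at h2
    omega

lemma ft_eq {p : Partition'} {f j : ℕ} (h1 : j < p.parts f) (h2 : p.parts (f + 1) ≤ j) :
    ft p j = f := by
  have hle : ft p j ≤ f := Nat.find_le h2
  rcases lt_or_eq_of_le hle with h | h
  · have := ft_le p j
    have : p.parts f ≤ p.parts (ft p j + 1) := p.antitone (by omega)
    omega
  · exact h

lemma le_ft {p : Partition'} {i j : ℕ} (h : j < p.parts i) : i ≤ ft p j := by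
  by_contra hc
  have : p.parts i ≤ p.parts (ft p j + 1) := p.antitone (by omega)
  have := ft_le p j
  omega

lemma colLen_eq {p : Partition'} {i j : ℕ} (h : j < p.parts i) :
    p.colLen j = ft p j + 1 := by
  have hset : {a : ℕ | (a, j) ∈ p.cells} = ↑(Finset.range (ft p j + 1)) := by
    ext a
    simp only [Set.mem_setOf_eq, Finset.coe_range, Set.mem_Iio, cells]
    constructor
    · intro ha
      exact Nat.lt_succ_of_le (le_ft ha)
    · intro ha
      have : p.parts (ft p j) ≤ p.parts a := p.antitone (by omega)
      have := ft_gt h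
      simpa using by omega
  rw [colLen, hset, Set.ncard_coe_finset, Finset.card_range]

lemma legLength_eq {p : Partition'} {i j : ℕ} (h : j < p.parts i) :
    p.legLength i j = ft p j - i := by
  rw [legLength, colLen_eq h]; omega

lemma footRes_eq {p : Partition'} (e : ℕ) {i j : ℕ} (h : j < p.parts i) :
    footRes e p j = (((j : ℤ) - ft p j : ℤ) : ZMod e) := by
  rw [footRes, colLen_eq h]
  push_cast
  ring_nf

end RimAux

namespace RimAux
open Partition'

def rowSet (R : ℕ → ℕ) : Set (ℕ × ℕ) := {x | x.2 < R x.1}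

lemma rowSet_inj {R S : ℕ → ℕ} (h : rowSet R = rowSet S) : R = S := by
  funext a
  have hb : ∀ b, b < R a ↔ b < S a := by
    intro b
    have := Set.ext_iff.mp h (a, b)
    simpa [rowSet] using this
  have h1 := hb (R a)
  have h2 := hb (S a)
  omega

lemma cells_eq_rowSet (p : Partition') : p.cells = rowSet p.parts := rfl

/-- Row lengths after removing the rim hook at `(i,j)`. -/
def Rem (p : Partition') (i j : ℕ) (a : ℕ) : ℕ :=
  if a < i then p.parts a else min (p.parts a) (max j (p.parts (a + 1) - 1))

lemma removal_eq {p : Partition'} {i j : ℕ} :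
    p.cells \ p.rimHook i j = rowSet (Rem p i j) := by
  ext ⟨a, b⟩
  simp only [Set.mem_diff, cells, rimHook, Set.mem_setOf_eq, rowSet, Rem, not_and, not_not]
  by_cases hai : a < i
  · simp only [if_pos hai]
    constructor
    · exact fun h => h.1
    · exact fun h => ⟨h, fun h' => by omega⟩
  · simp only [if_neg hai]
    omega

lemma Rem_succ_le (p : Partition') (i j a : ℕ) : Rem p i j (a + 1) ≤ Rem p i j a := by
  have h1 := p.antitone (show a ≤ a + 1 by omega)
  have h2 := p.antitone (show a + 1 ≤ a + 1 + 1 by omega)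
  unfold Rem
  split_ifs <;> omega

lemma Rem_antitone (p : Partition') (i j : ℕ) : ∀ ⦃a b : ℕ⦄, a ≤ b →
    Rem p i j b ≤ Rem p i j a := by
  have : Antitone (Rem p i j) := antitone_nat_of_succ_le (Rem_succ_le p i j)
  exact fun a b h => this h

section node
variable {p : Partition'} {i j : ℕ} (hij : j < p.parts i)

include hij

omit hij in
lemma Rem_lt (a : ℕ) (ha : a < i) : Rem p i j a = p.parts a := if_pos ha

lemma Rem_mid (a : ℕ) (ha1 : i ≤ a) (ha2 : a < ft p j) : Rem p i j a = p.parts (a + 1) - 1 := by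
  have h1 : j < p.parts (a + 1) := lt_of_lt_of_le (ft_gt hij) (p.antitone (by omega))
  have h2 := p.antitone (show a ≤ a + 1 by omega)
  unfold Rem
  rw [if_neg (by omega)]
  omega

lemma Rem_foot : Rem p i j (ft p j) = j := by
  have h1 := ft_gt hij
  have h2 := ft_le p j
  have h3 := le_ft hij
  unfold Rem
  rw [if_neg (by omega)]
  omega

omit hij in
lemma Rem_gt (a : ℕ) (ha : ft p j < a) : Rem p i j a = p.parts a := by
  have h1 : p.parts a ≤ j := le_trans (p.antitone (by omega)) (ft_le p j)
  have h2 := p.antitone (show a ≤ a + 1 by omega)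
  unfold Rem
  split_ifs
  · rfl
  · omega

end node

/-- The `df`-sequence of the removal. -/
def g (p : Partition') (i j : ℕ) (a : ℕ) : ℤ := (Rem p i j a : ℤ) - a

lemma g_strictAnti (p : Partition') (i j : ℕ) : StrictAnti (g p i j) := by
  apply strictAnti_nat_of_succ_lt
  intro a
  have := Rem_succ_le p i j a
  unfold g; push_cast; omega

/-- Two strictly decreasing integer sequences with the same range are equal. -/
lemma strictAnti_range_eq {s t : ℕ → ℤ} (hs : StrictAnti s) (ht : StrictAnti t)
    (h : Set.range s = Set.range t) : s = t := by
  funext a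
  induction a using Nat.strong_induction_on with
  | _ a ih =>
    have h1 : s a ≤ t a := by
      obtain ⟨b, hb⟩ : s a ∈ Set.range t := h ▸ Set.mem_range_self a
      rcases lt_or_ge b a with hba | hba
      · have hsba : s b = s a := by rw [ih b hba, hb]
        have := hs.injective hsba
        omega
      · rw [← hb]; exact ht.antitone hba
    have h2 : t a ≤ s a := by
      obtain ⟨b, hb⟩ : t a ∈ Set.range s := h.symm ▸ Set.mem_range_self a
      rcases lt_or_ge b a with hba | hba
      · have htba : t b = t a := by rw [← ih b hba, hb]
        have := ht.injective htba
        omega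
      · rw [← hb]; exact hs.antitone hba
    omega

end RimAux

namespace RimAux
open Partition'

section node2
variable {p : Partition'} {i j : ℕ}

lemma alpha'_not_mem (hij : j < p.parts i) : ((j : ℤ) - ft p j) ∉ D p := by
  rintro ⟨b, hb⟩
  have h1 : j < p.parts (ft p j) := ft_gt hij
  have h2 := ft_le p j
  rcases le_or_gt b (ft p j) with h | h
  · have h3 : df p (ft p j) ≤ df p b := (df_strictAnti p).antitone h
    unfold df at h3 hb
    omega
  · have h3 : df p b ≤ df p (ft p j + 1) := (df_strictAnti p).antitone h
    unfold df at h3 hb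
    omega

lemma alpha'_lt (hij : j < p.parts i) : ((j : ℤ) - ft p j) < df p i := by
  have h1 : j < p.parts (ft p j) := ft_gt hij
  have h3 : df p (ft p j) ≤ df p i := (df_strictAnti p).antitone (le_ft hij)
  unfold df at h3 ⊢
  omega

lemma g_range (hij : j < p.parts i) :
    Set.range (g p i j) = (D p \ {df p i}) ∪ {((j : ℤ) - ft p j)} := by
  have hft := ft_gt hij
  have hfle := ft_le p j
  have hif := le_ft hij
  ext z
  constructor
  · rintro ⟨a, rfl⟩
    rcases lt_or_ge a i with ha | ha
    · left
      refine ⟨⟨a, ?_⟩, ?_⟩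
      · unfold g df; rw [Rem_lt a ha]
      · simp only [Set.mem_singleton_iff]
        have : df p i < df p a := df_strictAnti p (by omega)
        unfold g df at this ⊢
        rw [Rem_lt a ha]
        omega
    · rcases lt_trichotomy a (ft p j) with ha2 | ha2 | ha2
      · left
        have hja : j < p.parts (a + 1) := lt_of_lt_of_le hft (p.antitone (by omega))
        refine ⟨⟨a + 1, ?_⟩, ?_⟩
        · unfold g df; rw [Rem_mid hij a ha ha2]; push_cast; omega
        · simp only [Set.mem_singleton_iff]
          have : df p (a + 1) < df p i := df_strictAnti p (by omega)
          unfold g df at this ⊢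
          rw [Rem_mid hij a ha ha2]
          push_cast
          omega
      · right
        simp only [Set.mem_singleton_iff]
        unfold g; rw [ha2, Rem_foot hij]
      · left
        refine ⟨⟨a, ?_⟩, ?_⟩
        · unfold g df; rw [Rem_gt a ha2]
        · simp only [Set.mem_singleton_iff]
          have : df p a < df p i := df_strictAnti p (by omega)
          unfold g df at this ⊢
          rw [Rem_gt a ha2]
          omega
  · rintro (⟨⟨b, rfl⟩, hb2⟩ | hz)
    · simp only [Set.mem_singleton_iff] at hb2
      have hbi : b ≠ i := fun h => hb2 (by rw [h])
      rcases lt_or_ge b i with h | h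
      · exact ⟨b, by unfold g df; rw [Rem_lt b h]⟩
      · have hbi' : i < b := by omega
        rcases le_or_gt b (ft p j) with h2 | h2
        · refine ⟨b - 1, ?_⟩
          have hb1 : b - 1 + 1 = b := by omega
          have hja : j < p.parts b := lt_of_lt_of_le hft (p.antitone h2)
          unfold g df
          rw [Rem_mid hij (b-1) (by omega) (by omega), hb1]
          push_cast
          omega
        · exact ⟨b, by unfold g df; rw [Rem_gt b h2]⟩
    · simp only [Set.mem_singleton_iff] at hz
      exact ⟨ft p j, by unfold g; rw [Rem_foot hij, hz]⟩

lemma leg_card (hij : j < p.parts i) :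
    (D p ∩ Set.Ioo ((j : ℤ) - ft p j) (df p i)).ncard = p.legLength i j := by
  have hft := ft_gt hij
  have hfle := ft_le p j
  have hset : D p ∩ Set.Ioo ((j : ℤ) - ft p j) (df p i) = df p '' (Set.Ioc i (ft p j)) := by
    ext z
    constructor
    · rintro ⟨⟨b, rfl⟩, hz1, hz2⟩
      refine ⟨b, ⟨?_, ?_⟩, rfl⟩
      · exact ((df_strictAnti p).lt_iff_gt).mp hz2
      · by_contra hc
        have : df p b ≤ df p (ft p j + 1) := (df_strictAnti p).antitone (by omega)
        unfold df at this hz1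
        omega
    · rintro ⟨b, ⟨hb1, hb2⟩, rfl⟩
      refine ⟨⟨b, rfl⟩, ?_, df_strictAnti p hb1⟩
      have : df p (ft p j) ≤ df p b := (df_strictAnti p).antitone hb2
      unfold df at this ⊢
      omega
  rw [hset, Set.ncard_image_of_injective _ (df_inj p), ← Finset.coe_Ioc,
    Set.ncard_coe_finset, Nat.card_Ioc, legLength_eq hij]

lemma reconstruct {v : ℤ} (hv1 : v < df p i) (hv2 : v ∉ D p) :
    ∃ j2 : ℕ, j2 < p.parts i ∧ ((j2 : ℤ) - ft p j2) = v := by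
  have hex : ∃ a : ℕ, df p a < v := by
    obtain ⟨N, hN⟩ := p.finite_support
    refine ⟨N + v.natAbs + 1, ?_⟩
    have : p.parts (N + v.natAbs + 1) = 0 := hN _ (by omega)
    unfold df
    rw [this]
    omega
  set F := Nat.find hex with hF
  have hF0 : F ≠ 0 := by
    intro h0
    have hs := Nat.find_spec hex
    rw [← hF, h0] at hs
    have : df p i ≤ df p 0 := (df_strictAnti p).antitone (Nat.zero_le i)
    omega
  set f2 := F - 1 with hf2def
  have hf2a : v < df p f2 := by
    have h1 : ¬ df p f2 < v := Nat.find_min hex (by omega)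
    have h2 : df p f2 ≠ v := fun h => hv2 ⟨f2, h⟩
    omega
  have hf2b : df p (f2 + 1) < v := by
    have : f2 + 1 = F := by omega
    rw [this]
    exact Nat.find_spec hex
  have hvf : 0 ≤ v + f2 := by
    unfold df at hf2b
    have : (0:ℤ) ≤ p.parts (f2+1) := Int.ofNat_nonneg _
    omega
  refine ⟨(v + f2).toNat, ?_, ?_⟩
  · have hif2 : i ≤ f2 := by
      have : df p i > df p (f2 + 1) := by omega
      have := ((df_strictAnti p).lt_iff_gt).mp this
      omega
    have h1 : ((v + f2).toNat : ℤ) = v + f2 := Int.toNat_of_nonneg hvf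
    have h2 : df p i ≤ df p i := le_refl _
    have h3 : p.parts f2 ≤ p.parts i := p.antitone hif2
    unfold df at hf2a
    have : ((v + f2).toNat : ℤ) < p.parts i := by push_cast; omega
    exact_mod_cast this
  · have h1 : ((v + f2).toNat : ℤ) = v + f2 := Int.toNat_of_nonneg hvf
    have hft2 : ft p ((v + f2).toNat) = f2 := by
      apply ft_eq
      · have : ((v + f2).toNat : ℤ) < p.parts f2 := by
          unfold df at hf2a; omega
        exact_mod_cast this
      · have : (p.parts (f2 + 1) : ℤ) ≤ ((v + f2).toNat : ℤ) := by
          unfold df at hf2b; omega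
        exact_mod_cast this
    rw [hft2, h1]
    ring

lemma node_j_inj {i2 j2 : ℕ} (hij : j < p.parts i) (hij2 : j2 < p.parts i2)
    (h : (j : ℤ) - ft p j = (j2 : ℤ) - ft p j2) : j = j2 := by
  have h1 : j < p.parts (ft p j) := ft_gt hij
  have h2 := ft_le p j
  have h3 : j2 < p.parts (ft p j2) := ft_gt hij2
  have h4 := ft_le p j2
  have hff : ft p j = ft p j2 := by
    by_contra hc
    rcases lt_or_gt_of_ne hc with hlt | hlt
    · have : p.parts (ft p j2) ≤ p.parts (ft p j + 1) := p.antitone (by omega)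
      omega
    · have : p.parts (ft p j) ≤ p.parts (ft p j2 + 1) := p.antitone (by omega)
      omega
  rw [hff] at h
  omega

end node2
end RimAux

namespace RimAux
open Partition'

lemma ncard_rowSet {R : ℕ → ℕ} {N : ℕ} (hN : ∀ a, N ≤ a → R a = 0) :
    (rowSet R).ncard = ∑ a ∈ Finset.range N, R a := by
  have hset : rowSet R
      = ↑((Finset.range N).biUnion (fun a => ({a} : Finset ℕ) ×ˢ Finset.range (R a))) := by
    ext ⟨a, b⟩
    simp only [rowSet, Set.mem_setOf_eq, Finset.coe_biUnion, Set.mem_iUnion, Finset.mem_coe,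
      Finset.mem_biUnion, Finset.mem_range, Finset.mem_product, Finset.mem_singleton]
    constructor
    · intro hb
      have haN : a < N := by
        by_contra hc
        rw [hN a (by omega)] at hb
        omega
      exact ⟨a, haN, rfl, hb⟩
    · rintro ⟨c, hc, rfl, hb⟩
      exact hb
  rw [hset, Set.ncard_coe_finset, Finset.card_biUnion]
  · apply Finset.sum_congr rfl
    intro a _
    rw [Finset.card_product, Finset.card_singleton, Finset.card_range, one_mul]
  · intro a _ b _ hab
    simp only [Finset.disjoint_left]
    rintro ⟨c, d⟩ hc hd
    simp only [Finset.mem_product, Finset.mem_singleton] at hc hd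
    exact hab (hc.1.symm.trans hd.1)

lemma sum_Rem {p : Partition'} {i j N : ℕ} (hij : j < p.parts i) (hN : ft p j < N) :
    (∑ a ∈ Finset.range N, (Rem p i j a : ℤ)) + (df p i - ((j : ℤ) - ft p j))
      = ∑ a ∈ Finset.range N, (p.parts a : ℤ) := by
  have hif : i ≤ ft p j := le_ft hij
  set f := ft p j with hf
  have e1 : ∑ a ∈ Finset.range N, (Rem p i j a : ℤ)
      = (∑ a ∈ Finset.Ico 0 i, (p.parts a : ℤ))
        + ((∑ a ∈ Finset.Ico (i+1) (f+1), (p.parts a : ℤ)) - ((f : ℤ) - (i : ℤ)))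
        + (j : ℤ) + (∑ a ∈ Finset.Ico (f+1) N, (p.parts a : ℤ)) := by
    rw [Finset.range_eq_Ico,
      ← Finset.sum_Ico_consecutive (fun a => (Rem p i j a : ℤ)) (Nat.zero_le i)
        (show i ≤ N by omega),
      ← Finset.sum_Ico_consecutive (fun a => (Rem p i j a : ℤ)) (show i ≤ f + 1 by omega)
        (show f + 1 ≤ N by omega),
      ← Finset.sum_Ico_consecutive (fun a => (Rem p i j a : ℤ)) (show i ≤ f by omega)
        (Nat.le_succ f)]
    have p1 : ∑ a ∈ Finset.Ico 0 i, (Rem p i j a : ℤ) = ∑ a ∈ Finset.Ico 0 i, (p.parts a : ℤ) := by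
      apply Finset.sum_congr rfl
      intro a ha
      rw [Finset.mem_Ico] at ha
      rw [Rem_lt a ha.2]
    have p2 : ∑ a ∈ Finset.Ico i f, (Rem p i j a : ℤ)
        = (∑ a ∈ Finset.Ico (i+1) (f+1), (p.parts a : ℤ)) - ((f : ℤ) - (i : ℤ)) := by
      have step : ∀ a ∈ Finset.Ico i f, (Rem p i j a : ℤ) = (p.parts (a+1) : ℤ) - 1 := by
        intro a ha
        rw [Finset.mem_Ico] at ha
        have hja : j < p.parts (a + 1) := lt_of_lt_of_le (ft_gt hij) (p.antitone (by omega))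
        rw [Rem_mid hij a ha.1 ha.2]
        push_cast [Nat.cast_sub (show 1 ≤ p.parts (a+1) by omega)]
        ring
      rw [Finset.sum_congr rfl step, Finset.sum_sub_distrib, Finset.sum_const,
        Nat.card_Ico, nsmul_eq_mul, mul_one]
      have shift : ∑ a ∈ Finset.Ico (i+1) (f+1), (p.parts a : ℤ)
          = ∑ a ∈ Finset.Ico i f, (p.parts (a+1) : ℤ) := by
        rw [← Finset.map_add_right_Ico _ _ 1, Finset.sum_map]
        rfl
      rw [shift]
      push_cast
      omega
    have p3 : ∑ a ∈ Finset.Ico f (f+1), (Rem p i j a : ℤ) = (j : ℤ) := by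
      rw [Finset.sum_Ico_succ_top (le_refl f), Finset.Ico_self, Finset.sum_empty, zero_add,
        Rem_foot hij]
    have p4 : ∑ a ∈ Finset.Ico (f+1) N, (Rem p i j a : ℤ)
        = ∑ a ∈ Finset.Ico (f+1) N, (p.parts a : ℤ) := by
      apply Finset.sum_congr rfl
      intro a ha
      rw [Finset.mem_Ico] at ha
      rw [Rem_gt a (by omega)]
    rw [p1, p2, p3, p4]; ring
  have e2 : ∑ a ∈ Finset.range N, (p.parts a : ℤ)
      = (∑ a ∈ Finset.Ico 0 i, (p.parts a : ℤ)) + (p.parts i : ℤ)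
        + (∑ a ∈ Finset.Ico (i+1) (f+1), (p.parts a : ℤ))
        + (∑ a ∈ Finset.Ico (f+1) N, (p.parts a : ℤ)) := by
    rw [Finset.range_eq_Ico,
      ← Finset.sum_Ico_consecutive (fun a => (p.parts a : ℤ)) (Nat.zero_le i)
        (show i ≤ N by omega),
      ← Finset.sum_Ico_consecutive (fun a => (p.parts a : ℤ)) (show i ≤ f + 1 by omega)
        (show f + 1 ≤ N by omega),
      ← Finset.sum_Ico_consecutive (fun a => (p.parts a : ℤ)) (show i ≤ i + 1 by omega)
        (show i + 1 ≤ f + 1 by omega)]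
    rw [Finset.sum_Ico_succ_top (le_refl i), Finset.Ico_self, Finset.sum_empty, zero_add]
    ring
  rw [e1, e2]
  unfold df
  ring

lemma move_sub_eq {p q : Partition'} (hpq : p.size = q.size) {i j k l : ℕ}
    (hx : (i, j) ∈ p.cells) (hy : (k, l) ∈ q.cells)
    (hrel : p.cells \ p.rimHook i j = q.cells \ q.rimHook k l) :
    df p i - ((j : ℤ) - ft p j) = df q k - ((l : ℤ) - ft q l) := by
  have hij : j < p.parts i := hx
  have hkl : l < q.parts k := hy
  have hRem : Rem p i j = Rem q k l := by
    apply rowSet_inj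
    rw [← removal_eq, ← removal_eq, hrel]
  obtain ⟨N1, hN1⟩ := p.finite_support
  obtain ⟨N2, hN2⟩ := q.finite_support
  set N := max (max N1 N2) (max (ft p j + 1) (ft q l + 1)) with hNdef
  have hp0 : ∀ a, N ≤ a → p.parts a = 0 := fun a ha => hN1 a (by omega)
  have hq0 : ∀ a, N ≤ a → q.parts a = 0 := fun a ha => hN2 a (by omega)
  have hsz : ∑ a ∈ Finset.range N, p.parts a = ∑ a ∈ Finset.range N, q.parts a := by
    rw [← ncard_rowSet hp0, ← ncard_rowSet hq0, ← cells_eq_rowSet, ← cells_eq_rowSet]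
    exact hpq
  have hszZ : ∑ a ∈ Finset.range N, (p.parts a : ℤ) = ∑ a ∈ Finset.range N, (q.parts a : ℤ) := by
    push_cast [← Nat.cast_sum]
    exact_mod_cast hsz
  have s1 := sum_Rem hij (show ft p j < N by omega)
  have s2 := sum_Rem hkl (show ft q l < N by omega)
  rw [hRem] at s1
  omega

end RimAux

namespace RimAux
open Partition'

open scoped Classical in
lemma ncard_singleton_inter (S : Set ℤ) (b : ℤ) :
    (S ∩ {b}).ncard = (if b ∈ S then 1 else 0) := by
  split_ifs with h
  · have hset : S ∩ {b} = {b} := by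
      ext z
      simp only [Set.mem_inter_iff, Set.mem_singleton_iff]
      exact ⟨fun hz => hz.2, fun hz => ⟨hz ▸ h, hz⟩⟩
    rw [hset]
    exact Set.ncard_singleton b
  · have hset : S ∩ {b} = ∅ := by
      ext z
      simp only [Set.mem_inter_iff, Set.mem_singleton_iff, Set.mem_empty_iff_false, iff_false,
        not_and]
      rintro hz rfl
      exact h hz
    rw [hset]
    exact Set.ncard_empty ℤ

open scoped Classical in
lemma ncard_split {S : Set ℤ} {a b c : ℤ} (h1 : a < b) (h2 : b < c) :
    (S ∩ Set.Ioo a c).ncard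
      = (S ∩ Set.Ioo a b).ncard + (S ∩ Set.Ioo b c).ncard + (if b ∈ S then 1 else 0) := by
  have hdec : S ∩ Set.Ioo a c = ((S ∩ Set.Ioo a b) ∪ (S ∩ Set.Ioo b c)) ∪ (S ∩ {b}) := by
    ext z
    simp only [Set.mem_inter_iff, Set.mem_union, Set.mem_Ioo, Set.mem_singleton_iff]
    by_cases hz : z ∈ S
    · simp only [hz, true_and]; omega
    · simp [hz]
  have f1 : (S ∩ Set.Ioo a b).Finite := (Set.finite_Ioo a b).inter_of_right S
  have f2 : (S ∩ Set.Ioo b c).Finite := (Set.finite_Ioo b c).inter_of_right S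
  have f3 : (S ∩ {b}).Finite := (Set.finite_singleton b).inter_of_right S
  have d1 : Disjoint (S ∩ Set.Ioo a b) (S ∩ Set.Ioo b c) := by
    rw [Set.disjoint_left]
    rintro z ⟨_, hz1⟩ ⟨_, hz2⟩
    simp only [Set.mem_Ioo] at hz1 hz2
    omega
  have d2 : Disjoint ((S ∩ Set.Ioo a b) ∪ (S ∩ Set.Ioo b c)) (S ∩ {b}) := by
    rw [Set.disjoint_left]
    rintro z (⟨_, hz1⟩ | ⟨_, hz1⟩) ⟨_, hz2⟩ <;>
      simp only [Set.mem_Ioo] at hz1 <;>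
      simp only [Set.mem_singleton_iff] at hz2 <;> omega
  rw [hdec, Set.ncard_union_eq d2 (f1.union f2) f3, Set.ncard_union_eq d1 f1 f2,
    ncard_singleton_inter]

lemma moves_iff {p q : Partition'} {i j k l : ℕ} (hx : (i, j) ∈ p.cells) (hy : (k, l) ∈ q.cells)
    (hrel : p.cells \ p.rimHook i j = q.cells \ q.rimHook k l) (z : ℤ) :
    ((z ∈ D p ∧ z ≠ df p i) ∨ z = (j : ℤ) - ft p j)
      ↔ ((z ∈ D q ∧ z ≠ df q k) ∨ z = (l : ℤ) - ft q l) := by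
  have hij : j < p.parts i := hx
  have hkl : l < q.parts k := hy
  have hRem : Rem p i j = Rem q k l := rowSet_inj (by rw [← removal_eq, ← removal_eq, hrel])
  have hg : g p i j = g q k l := funext fun a => by unfold g; rw [hRem]
  have hr := congrArg Set.range hg
  rw [g_range hij, g_range hkl] at hr
  have := Set.ext_iff.mp hr z
  simp only [Set.mem_union, Set.mem_diff, Set.mem_singleton_iff] at this
  tauto

lemma cells_eq_of_moves {p q : Partition'} {i j2 k2 l2 : ℕ}
    (h1 : (i, j2) ∈ p.cells) (h2 : (k2, l2) ∈ q.cells)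
    (h : (D p \ {df p i}) ∪ {((j2 : ℤ) - ft p j2)} = (D q \ {df q k2}) ∪ {((l2 : ℤ) - ft q l2)}) :
    p.cells \ p.rimHook i j2 = q.cells \ q.rimHook k2 l2 := by
  have hij : j2 < p.parts i := h1
  have hkl : l2 < q.parts k2 := h2
  rw [removal_eq, removal_eq]
  have hRem : Rem p i j2 = Rem q k2 l2 := by
    have hg := strictAnti_range_eq (g_strictAnti p i j2) (g_strictAnti q k2 l2)
      (by rw [g_range hij, g_range hkl, h])
    funext a
    have := congrFun hg a
    unfold g at this
    omega
  rw [hRem]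

end RimAux

namespace RimAux
open Partition'

set_option maxHeartbeats 1000000 in
lemma core (p q : Partition') (hpq : p.size = q.size)
    (i j k l : ℕ) (hx : (i, j) ∈ p.cells) (hy : (k, l) ∈ q.cells)
    (hrel : p.cells \ p.rimHook i j = q.cells \ q.rimHook k l)
    (hlt : (l : ℤ) - ft q l < (j : ℤ) - ft p j) :
    ∃! z : (ℕ × ℕ) × (ℕ × ℕ), z ≠ ((i, j), (k, l)) ∧
      z.1 ∈ p.cells ∧ z.2 ∈ q.cells ∧
      p.cells \ p.rimHook z.1.1 z.1.2 = q.cells \ q.rimHook z.2.1 z.2.2 ∧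
      (p.legLength i j + q.legLength k l) % 2
        ≠ (p.legLength z.1.1 z.1.2 + q.legLength z.2.1 z.2.2) % 2 := by
  have hij : j < p.parts i := hx
  have hkl : l < q.parts k := hy
  have hN := moves_iff hx hy hrel
  have hsub : df p i - ((j : ℤ) - ft p j) = df q k - ((l : ℤ) - ft q l) :=
    move_sub_eq hpq hx hy hrel
  have hαA : df p i ∈ D p := ⟨i, rfl⟩
  have hβB : df q k ∈ D q := ⟨k, rfl⟩
  have ha'A : ((j : ℤ) - ft p j) ∉ D p := alpha'_not_mem hij
  have hb'B : ((l : ℤ) - ft q l) ∉ D q := alpha'_not_mem hkl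
  have ha'α : ((j : ℤ) - ft p j) < df p i := alpha'_lt hij
  have hb'β : ((l : ℤ) - ft q l) < df q k := alpha'_lt hkl
  set α := df p i with hαdef
  set a' := ((j : ℤ) - ft p j) with ha'def
  set β := df q k with hβdef
  set b' := ((l : ℤ) - ft q l) with hb'def
  have hαβ : α ≠ β := by
    intro h
    rw [h] at hsub
    omega
  have hb'A : b' ∈ D p ∧ b' ≠ α := by
    rcases (hN b').mpr (Or.inr rfl) with h | h
    · exact h
    · omega
  have ha'B : a' ∈ D q ∧ a' ≠ β := by
    rcases (hN a').mp (Or.inr rfl) with h | h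
    · exact h
    · omega
  obtain ⟨hb'Amem, hb'Ane⟩ := hb'A
  obtain ⟨ha'Bmem, ha'Bne⟩ := ha'B
  have hβα : β < α := by omega
  have hβA : β ∉ D p := by
    intro hc
    rcases (hN β).mp (Or.inl ⟨hc, Ne.symm hαβ⟩) with h | h
    · exact h.2 rfl
    · omega
  have hαB : α ∉ D q := by
    intro hc
    rcases (hN α).mpr (Or.inl ⟨hc, hαβ⟩) with h | h
    · exact h.2 rfl
    · omega
  -- construct the second pair
  obtain ⟨j2, hj2lt, hj2val⟩ := reconstruct (show β < df p i from hβα) hβA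
  obtain ⟨k2, hk2val⟩ := ha'Bmem
  have ha'Bmem : a' ∈ D q := ⟨k2, hk2val⟩
  obtain ⟨l2, hl2lt, hl2val⟩ :=
    reconstruct (show b' < df q k2 by rw [hk2val]; omega) hb'B
  have hx2 : ((i, j2) : ℕ × ℕ) ∈ p.cells := hj2lt
  have hy2 : ((k2, l2) : ℕ × ℕ) ∈ q.cells := hl2lt
  have hEq2 : (D p \ {df p i}) ∪ {((j2 : ℤ) - ft p j2)}
      = (D q \ {df q k2}) ∪ {((l2 : ℤ) - ft q l2)} := by
    rw [hj2val, hl2val, hk2val, ← hαdef]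
    ext z
    have h := hN z
    simp only [Set.mem_union, Set.mem_diff, Set.mem_singleton_iff] at h ⊢
    by_cases h1 : z = α
    · subst h1
      have hαb' : α ≠ b' := by omega
      constructor
      · rintro (⟨_, hzz⟩ | hzz)
        · exact absurd rfl hzz
        · exact absurd hzz hαβ
      · rintro (⟨hzz, _⟩ | hzz)
        · exact absurd hzz hαB
        · exact absurd hzz hαb'
    · by_cases h2 : z = β
      · subst h2
        have hβa' : β ≠ a' := Ne.symm ha'Bne
        constructor
        · intro _
          exact Or.inl ⟨hβB, hβa'⟩
        · intro _
          exact Or.inr rfl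
      · by_cases h3 : z = a'
        · subst h3
          have ha'b' : a' ≠ b' := by omega
          constructor
          · rintro (⟨hzz, _⟩ | hzz)
            · exact absurd hzz ha'A
            · exact absurd hzz ha'Bne
          · rintro (⟨_, hzz⟩ | hzz)
            · exact absurd rfl hzz
            · exact absurd hzz ha'b'
        · by_cases h4 : z = b'
          · subst h4
            constructor
            · intro _
              exact Or.inr rfl
            · intro _
              exact Or.inl ⟨hb'Amem, hb'Ane⟩
          · constructor
            · rintro (⟨hzz, _⟩ | hzz)
              · rcases h.mp (Or.inl ⟨hzz, h1⟩) with h' | h'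
                · exact Or.inl ⟨h'.1, h3⟩
                · exact absurd h' h4
              · exact absurd hzz h2
            · rintro (⟨hzz, _⟩ | hzz)
              · rcases h.mpr (Or.inl ⟨hzz, h2⟩) with h' | h'
                · exact Or.inl ⟨h'.1, h1⟩
                · exact absurd h' h3
              · exact absurd hzz h4
  have hrel2 : p.cells \ p.rimHook i j2 = q.cells \ q.rimHook k2 l2 :=
    cells_eq_of_moves hx2 hy2 hEq2
  -- leg lengths
  have L1p : p.legLength i j = (D p ∩ Set.Ioo a' α).ncard := (leg_card hij).symm
  have L1q : q.legLength k l = (D q ∩ Set.Ioo b' β).ncard := (leg_card hkl).symm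
  have L2p : p.legLength i j2 = (D p ∩ Set.Ioo β α).ncard := by
    have h := leg_card hj2lt
    rw [hj2val] at h
    exact h.symm
  have L2q : q.legLength k2 l2 = (D q ∩ Set.Ioo b' a').ncard := by
    have h := leg_card hl2lt
    rw [hl2val, hk2val] at h
    exact h.symm
  have hpar : (p.legLength i j + q.legLength k l) % 2
      ≠ (p.legLength i j2 + q.legLength k2 l2) % 2 := by
    rw [L1p, L1q, L2p, L2q]
    have hβa' : β ≠ a' := Ne.symm ha'Bne
    rcases lt_or_gt_of_ne hβa' with hc | hc
    · -- β < a' : order b' < β < a' < α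
      have s1 := ncard_split (S := D p) hc ha'α
      rw [if_neg ha'A] at s1
      have s2 := ncard_split (S := D q) (show b' < β by omega) (show β < a' from hc)
      rw [if_pos hβB] at s2
      have s3 : D p ∩ Set.Ioo β a' = D q ∩ Set.Ioo β a' := by
        ext z
        simp only [Set.mem_inter_iff, Set.mem_Ioo]
        constructor
        · rintro ⟨hz, hz1, hz2⟩
          refine ⟨?_, hz1, hz2⟩
          rcases (hN z).mp (Or.inl ⟨hz, by omega⟩) with h | h
          · exact h.1
          · omega
        · rintro ⟨hz, hz1, hz2⟩
          refine ⟨?_, hz1, hz2⟩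
          rcases (hN z).mpr (Or.inl ⟨hz, by omega⟩) with h | h
          · exact h.1
          · omega
      have s3' := congrArg Set.ncard s3
      omega
    · -- a' < β : order b' < a' < β < α
      have s1 := ncard_split (S := D p) hc hβα
      rw [if_neg hβA] at s1
      have s2 := ncard_split (S := D q) (show b' < a' by omega) (show a' < β from hc)
      rw [if_pos ha'Bmem] at s2
      have s3 : D p ∩ Set.Ioo a' β = D q ∩ Set.Ioo a' β := by
        ext z
        simp only [Set.mem_inter_iff, Set.mem_Ioo]
        constructor
        · rintro ⟨hz, hz1, hz2⟩
          refine ⟨?_, hz1, hz2⟩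
          rcases (hN z).mp (Or.inl ⟨hz, by omega⟩) with h | h
          · exact h.1
          · omega
        · rintro ⟨hz, hz1, hz2⟩
          refine ⟨?_, hz1, hz2⟩
          rcases (hN z).mpr (Or.inl ⟨hz, by omega⟩) with h | h
          · exact h.1
          · omega
      have s3' := congrArg Set.ncard s3
      omega
  refine ⟨((i, j2), (k2, l2)), ⟨?_, hx2, hy2, hrel2, hpar⟩, ?_⟩
  · intro hco
    have hj2j : j2 = j := by
      have := congrArg (fun w => w.1.2) hco
      simpa using this
    rw [hj2j] at hj2val
    exact ha'Bne hj2val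
  · rintro ⟨⟨i3, j3⟩, k3, l3⟩ ⟨hzne, hz1, hz2, hzrel, hzpar⟩
    have hij3 : j3 < p.parts i3 := hz1
    have hkl3 : l3 < q.parts k3 := hz2
    have hM := moves_iff hz1 hz2 hzrel
    have hsub3 : df p i3 - ((j3 : ℤ) - ft p j3) = df q k3 - ((l3 : ℤ) - ft q l3) :=
      move_sub_eq hpq hz1 hz2 hzrel
    have hγA : df p i3 ∈ D p := ⟨i3, rfl⟩
    have hδB : df q k3 ∈ D q := ⟨k3, rfl⟩
    have hc'A : ((j3 : ℤ) - ft p j3) ∉ D p := alpha'_not_mem hij3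
    have hd'B : ((l3 : ℤ) - ft q l3) ∉ D q := alpha'_not_mem hkl3
    have hc'γ : ((j3 : ℤ) - ft p j3) < df p i3 := alpha'_lt hij3
    have hd'δ : ((l3 : ℤ) - ft q l3) < df q k3 := alpha'_lt hkl3
    set γ := df p i3 with hγdef
    set c' := ((j3 : ℤ) - ft p j3) with hc'def
    set δ := df q k3 with hδdef
    set d' := ((l3 : ℤ) - ft q l3) with hd'def
    -- step 1 : γ = α
    have hγα : γ = α := by
      by_contra hne
      rcases (hN γ).mp (Or.inl ⟨hγA, hne⟩) with ⟨hγB, hγβ⟩ | hγb'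
      · -- γ ∈ D q, γ ≠ β
        have hδγ : δ = γ := by
          by_contra hdg
          rcases (hM γ).mpr (Or.inl ⟨hγB, fun hh => hdg hh.symm⟩) with h | h
          · exact h.2 rfl
          · omega
        have hαd' : α = d' := by
          rcases (hM α).mp (Or.inl ⟨hαA, fun hh => hne hh.symm⟩) with h | h
          · exact absurd h.1 hαB
          · exact h
        have hβc' : β = c' := by
          rcases (hM β).mpr (Or.inl ⟨hβB, fun hh => hγβ (hδγ ▸ hh).symm⟩) with h | h
          · exact absurd h.1 hβA
          · exact h
        omega
      · -- γ = b'
        have hαd' : α = d' := by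
          rcases (hM α).mp (Or.inl ⟨hαA, by omega⟩) with h | h
          · exact absurd h.1 hαB
          · exact h
        have h2 : ¬ ((δ ∈ D p ∧ δ ≠ γ) ∨ δ = c') := by
          intro hcc
          rcases (hM δ).mp hcc with h | h
          · exact h.2 rfl
          · omega
        by_cases hδβ : δ = β
        · omega
        · rcases (hN δ).mpr (Or.inl ⟨hδB, hδβ⟩) with ⟨hδA, hδα⟩ | hδa'
          · by_cases hδγ2 : δ = γ
            · omega
            · exact h2 (Or.inl ⟨hδA, hδγ2⟩)
          · omega
    -- step 2 : δ = β or δ = a'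
    have hδcases : δ = β ∨ δ = a' := by
      by_cases hδβ : δ = β
      · exact Or.inl hδβ
      · rcases (hN δ).mpr (Or.inl ⟨hδB, hδβ⟩) with ⟨hδA, hδα⟩ | hδa'
        · exfalso
          have h5 : ¬ ((δ ∈ D p ∧ δ ≠ γ) ∨ δ = c') := by
            intro hcc
            rcases (hM δ).mp hcc with h | h
            · exact h.2 rfl
            · omega
          exact h5 (Or.inl ⟨hδA, by rw [hγα]; exact hδα⟩)
        · exact Or.inr hδa'
    have hd'b' : d' = b' := by
      rcases (hM b').mp (Or.inl ⟨hb'Amem, by rw [hγα]; exact hb'Ane⟩) with h | h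
      · exact absurd h.1 hb'B
      · exact h.symm
    rcases hδcases with hδβ | hδa'
    · -- this is the original pair : contradiction with hzne
      exfalso
      have hc'a' : c' = a' := by omega
      have e1 : i3 = i := df_inj p hγα
      have e2 : j3 = j := node_j_inj hij3 hij hc'a'
      have e3 : k3 = k := df_inj q hδβ
      have e4 : l3 = l := node_j_inj hkl3 hkl hd'b'
      exact hzne (by rw [e1, e2, e3, e4])
    · -- this is the constructed pair
      have hc'β : c' = β := by
        rcases (hM β).mpr (Or.inl ⟨hβB, by rw [hδa']; exact fun hh => ha'Bne hh.symm⟩) with h | h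
        · exact absurd h.1 hβA
        · exact h.symm
      have e1 : i3 = i := df_inj p hγα
      have e2 : j3 = j2 := node_j_inj hij3 hj2lt (by rw [hj2val]; exact hc'β)
      have e3 : k3 = k2 := df_inj q (show δ = df q k2 by rw [hδa', hk2val])
      have e4 : l3 = l2 := node_j_inj hkl3 hl2lt (by rw [hl2val]; exact hd'b')
      rw [e1, e2, e3, e4]

end RimAux

namespace RimAux

lemma swap_ne {A B : Type*} {a c : A} {b d : B} (h : (a, b) ≠ (c, d)) : (b, a) ≠ (d, c) := by
  intro hco
  apply h
  rw [Prod.ext_iff] at hco ⊢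
  exact ⟨hco.2, hco.1⟩

end RimAux

/-- Suppose `λ ⊳ μ` are partitions of `n` with `[μ] \ r^μ_y = [λ] \ r^λ_x` for rim hooks at
`x = (i,j)` and `y = (k,l)`.  If the foot residues mod `e` of `r^λ_x` and `r^μ_y` differ,
then there is exactly one other pair of rim hooks `(r^λ_{x'}, r^μ_{y'})` with
`[λ] \ r^λ_{x'} = [μ] \ r^μ_{y'}`, and the leg-length sums of the two pairs have opposite
parities. -/
theorem stmt12 (e n : ℕ) (he : 2 ≤ e) (lam mu : Partition')
    (hn : lam.size = n) (hm : mu.size = n)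
    (hdom : Partition'.Dominates lam mu) (hne : lam ≠ mu)
    (i j k l : ℕ) (hx : (i, j) ∈ lam.cells) (hy : (k, l) ∈ mu.cells)
    (hrel : lam.cells \ lam.rimHook i j = mu.cells \ mu.rimHook k l)
    (hres : Partition'.footRes e lam j ≠ Partition'.footRes e mu l) :
    ∃! z : (ℕ × ℕ) × (ℕ × ℕ), z ≠ ((i, j), (k, l)) ∧
      z.1 ∈ lam.cells ∧ z.2 ∈ mu.cells ∧
      lam.cells \ lam.rimHook z.1.1 z.1.2 = mu.cells \ mu.rimHook z.2.1 z.2.2 ∧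
      (Partition'.legLength lam i j + Partition'.legLength mu k l) % 2
        ≠ (Partition'.legLength lam z.1.1 z.1.2 + Partition'.legLength mu z.2.1 z.2.2) % 2 := by
  have hij : j < lam.parts i := hx
  have hkl : l < mu.parts k := hy
  have hpq : lam.size = mu.size := by rw [hn, hm]
  have hres' : ((j : ℤ) - RimAux.ft lam j) ≠ ((l : ℤ) - RimAux.ft mu l) := by
    intro h
    apply hres
    rw [RimAux.footRes_eq e hij, RimAux.footRes_eq e hkl, h]
  rcases lt_or_gt_of_ne hres' with hlt | hlt
  · -- swapped case
    obtain ⟨⟨⟨k4, l4⟩, i4, j4⟩, ⟨hne4, h1, h2, h3, h4⟩, huniq⟩ :=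
      RimAux.core mu lam hpq.symm k l i j hy hx hrel.symm hlt
    refine ⟨((i4, j4), (k4, l4)), ⟨RimAux.swap_ne hne4, h2, h1, h3.symm, by dsimp only at h4 ⊢; omega⟩, ?_⟩
    rintro ⟨⟨i5, j5⟩, k5, l5⟩ ⟨hzne, hz1, hz2, hzrel, hzpar⟩
    have h6 := huniq ((k5, l5), (i5, j5))
      ⟨RimAux.swap_ne hzne, hz2, hz1, hzrel.symm, by dsimp only at hzpar ⊢; omega⟩
    rw [Prod.ext_iff] at h6 ⊢
    exact ⟨h6.2, h6.1⟩
  · exact RimAux.core lam mu hpq i j k l hx hy hrel hlt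
end
end

section
/- Two multipartitions λ of n and μ of n (with fixed multicharge c and e finite) satisfy C_f(λ) = C_f(μ) for all f ∈ Z/eZ if and only if λ and μ have the same hub (δ_f(λ) = δ_f(μ) for all f). -/
noncomputable section

namespace Partition'

/-- Removable nodes of residue `f` (with charge `c`) of a partition. -/
def removableNodes (e : ℕ) (c : ℤ) (p : Partition') (f : ZMod e) : Set (ℕ × ℕ) :=
  {x | x ∈ p.cells ∧ x.2 + 1 = p.parts x.1 ∧ p.parts (x.1 + 1) ≤ x.2 ∧
       (((x.2 : ℤ) - x.1 + c : ℤ) : ZMod e) = f}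

/-- Addable nodes of residue `f` (with charge `c`) of a partition. -/
def addableNodes (e : ℕ) (c : ℤ) (p : Partition') (f : ZMod e) : Set (ℕ × ℕ) :=
  {x | x.2 = p.parts x.1 ∧ (x.1 = 0 ∨ x.2 < p.parts (x.1 - 1)) ∧
       (((x.2 : ℤ) - x.1 + c : ℤ) : ZMod e) = f}

/-- The hub `δ_f(λ)` of an `r`-multipartition `λ` with multicharge `c`. -/
def hub (e r : ℕ) (c : Fin r → ℤ) (lam : Fin r → Partition') (f : ZMod e) : ℤ :=
  ∑ a : Fin r, (((removableNodes e (c a) (lam a) f).ncard : ℤ)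
    - ((addableNodes e (c a) (lam a) f).ncard : ℤ))

/-- `C_f(λ)` for an `r`-multipartition `λ` with multicharge `c`. -/
def mresCount (e r : ℕ) (c : Fin r → ℤ) (lam : Fin r → Partition') (f : ZMod e) : ℕ :=
  ∑ a : Fin r, resCount e (c a) (lam a) f

/-- The size `|λ|` of an `r`-multipartition. -/
def msize (r : ℕ) (lam : Fin r → Partition') : ℕ := ∑ a : Fin r, (lam a).size

/-- Fayers' weight `Wt(λ)` of an `r`-multipartition `λ` with multicharge `c`. -/
def Wt (e r : ℕ) [NeZero e] (c : Fin r → ℤ) (lam : Fin r → Partition') : ℚ :=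
  (∑ a : Fin r, (mresCount e r c lam ((c a : ZMod e)) : ℚ))
    - (1 / 2) * ∑ f : ZMod e, ((mresCount e r c lam f : ℚ) - (mresCount e r c lam (f + 1) : ℚ)) ^ 2

end Partition'

namespace StmtAux
open Finset

def chi (e : ℕ) (f : ZMod e) (z : ℤ) : ℤ := if ((z : ZMod e) = f) then 1 else 0

lemma chi_succ (e : ℕ) (f : ZMod e) (z : ℤ) : chi e (f + 1) z = chi e f (z - 1) := by
  unfold chi
  congr 1
  push_cast
  exact propext sub_eq_iff_eq_add.symm

lemma chi_pred (e : ℕ) (f : ZMod e) (z : ℤ) : chi e (f - 1) z = chi e f (z + 1) := by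
  unfold chi
  congr 1
  push_cast
  exact propext eq_sub_iff_add_eq

lemma natcast_const (e : ℕ) [NeZero e] (d : ZMod e → ℤ) (hc : ∀ f, d (f + 1) = d f) :
    ∀ f, d f = d 0 := by
  have key : ∀ k : ℕ, d (k : ZMod e) = d 0 := by
    intro k
    induction k with
    | zero => simp
    | succ k ih => push_cast; rw [hc, ih]
  intro f
  obtain ⟨k, rfl⟩ := ZMod.natCast_rightInverse.surjective f
  exact key k

lemma sum_shift (e : ℕ) [NeZero e] (d : ZMod e → ℤ) :
    ∑ f : ZMod e, d (f + 1) = ∑ f : ZMod e, d f :=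
  Fintype.sum_equiv (Equiv.addRight 1) (fun f => d (f + 1)) d (fun _ => rfl)

lemma harmonic_zero (e : ℕ) [NeZero e] (d : ZMod e → ℤ)
    (hlin : ∀ f, 2 * d f = d (f + 1) + d (f - 1)) (hsum : ∑ f : ZMod e, d f = 0) :
    ∀ f, d f = 0 := by
  set g : ZMod e → ℤ := fun f => d (f + 1) - d f with hg
  have hgc : ∀ f, g (f + 1) = g f := by
    intro f
    have h := hlin (f + 1)
    simp only [hg, add_sub_cancel_right] at *
    linarith
  have hgconst := natcast_const e g hgc
  have hsg : ∑ f : ZMod e, g f = 0 := by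
    simp only [hg]
    rw [Finset.sum_sub_distrib, sum_shift e d, sub_self]
  have hcard : (Fintype.card (ZMod e) : ℤ) = e := by rw [ZMod.card]
  have hg0 : g 0 = 0 := by
    have : ∑ f : ZMod e, g f = (e : ℤ) * g 0 := by
      rw [Finset.sum_congr rfl (fun f _ => hgconst f), Finset.sum_const, nsmul_eq_mul,
        Finset.card_univ, hcard]
    rw [hsg] at this
    have he : (e : ℤ) ≠ 0 := by exact_mod_cast (NeZero.ne e)
    exact (mul_eq_zero.mp this.symm).resolve_left he |>.symm ▸ rfl
  have hgz : ∀ f, g f = 0 := fun f => (hgconst f).trans hg0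
  have hdc : ∀ f, d (f + 1) = d f := by
    intro f; have := hgz f; simp only [hg] at this; linarith
  have hdconst := natcast_const e d hdc
  have hd0 : d 0 = 0 := by
    have : ∑ f : ZMod e, d f = (e : ℤ) * d 0 := by
      rw [Finset.sum_congr rfl (fun f _ => hdconst f), Finset.sum_const, nsmul_eq_mul,
        Finset.card_univ, hcard]
    rw [hsum] at this
    have he : (e : ℤ) ≠ 0 := by exact_mod_cast (NeZero.ne e)
    rcases mul_eq_zero.mp this.symm with h | h
    · exact absurd h he
    · exact h
  exact fun f => (hdconst f).trans hd0

end StmtAux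

namespace StmtAux
open Finset Partition'

variable (e : ℕ) (c : ℤ) (p : Partition')

/-- Generic decomposition of filtered cell counts into row sums. -/
lemma ncard_cells_filter (P : ℕ × ℕ → Prop) [DecidablePred P] (M : ℕ) (hM : ∀ i, M ≤ i → p.parts i = 0) :
    ({x ∈ p.cells | P x}).ncard
      = ∑ i ∈ range M, ∑ j ∈ range (p.parts i), (if P (i, j) then 1 else 0) := by
  classical
  have hset : {x ∈ p.cells | P x}
      = ↑(((range M) ×ˢ (range (p.parts 0 + 1))).filter
          (fun x => x.2 < p.parts x.1 ∧ P x)) := by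
    ext ⟨i, j⟩
    simp only [Set.mem_setOf_eq, Partition'.cells, coe_filter, mem_product, mem_range]
    constructor
    · rintro ⟨hij, hP⟩
      refine ⟨⟨?_, ?_⟩, hij, hP⟩
      · by_contra hi
        push_neg at hi
        rw [hM i hi] at hij; omega
      · have := p.antitone (Nat.zero_le i)
        omega
    · rintro ⟨-, hij, hP⟩
      exact ⟨hij, hP⟩
  rw [hset, Set.ncard_coe_finset, Finset.card_filter, Finset.sum_product]
  refine Finset.sum_congr rfl (fun i _ => ?_)
  have hsub : p.parts i ≤ p.parts 0 + 1 := le_trans (p.antitone (Nat.zero_le i)) (by omega)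
  calc ∑ j ∈ range (p.parts 0 + 1), (if j < p.parts i ∧ P (i, j) then 1 else 0)
      = ∑ j ∈ range (p.parts 0 + 1), (if j ∈ range (p.parts i) then (if P (i, j) then 1 else 0) else 0) := by
        refine Finset.sum_congr rfl (fun j _ => ?_)
        simp only [mem_range, ite_and]
    _ = ∑ j ∈ range (p.parts 0 + 1) ∩ range (p.parts i), (if P (i, j) then 1 else 0) :=
        Finset.sum_ite_mem _ _ _
    _ = ∑ j ∈ range (p.parts i), (if P (i, j) then 1 else 0) := by
        rw [Finset.inter_eq_right.mpr (Finset.range_subset_range.mpr hsub)]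

lemma resCount_eq (f : ZMod e) (M : ℕ) (hM : ∀ i, M ≤ i → p.parts i = 0) :
    (resCount e c p f : ℤ)
      = ∑ i ∈ range M, ∑ j ∈ range (p.parts i), chi e f ((j : ℤ) - i + c) := by
  classical
  have := ncard_cells_filter p (fun x => (((x.2 : ℤ) - x.1 + c : ℤ) : ZMod e) = f) M hM
  rw [Partition'.resCount, this]
  push_cast
  refine Finset.sum_congr rfl (fun i _ => Finset.sum_congr rfl (fun j _ => ?_))
  unfold chi
  split <;> simp_all

lemma size_eq (M : ℕ) (hM : ∀ i, M ≤ i → p.parts i = 0) :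
    p.size = ∑ i ∈ range M, p.parts i := by
  have h : {x ∈ p.cells | True} = p.cells := by simp
  have := ncard_cells_filter p (fun _ => True) M hM
  rw [h] at this
  rw [Partition'.size, this]
  simp

lemma sum_resCount [NeZero e] : ∑ f : ZMod e, resCount e c p f = p.size := by
  classical
  obtain ⟨M, hM⟩ := p.finite_support
  have hres : ∀ f : ZMod e, (resCount e c p f : ℤ)
      = ∑ i ∈ range M, ∑ j ∈ range (p.parts i), chi e f ((j : ℤ) - i + c) :=
    fun f => resCount_eq e c p f M hM
  have : (∑ f : ZMod e, (resCount e c p f : ℤ)) = ∑ i ∈ range M, (p.parts i : ℤ) := by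
    rw [Finset.sum_congr rfl (fun f _ => hres f)]
    rw [Finset.sum_comm]
    refine Finset.sum_congr rfl (fun i _ => ?_)
    rw [Finset.sum_comm]
    have : ∀ j : ℕ, ∑ f : ZMod e, chi e f ((j : ℤ) - i + c) = 1 := by
      intro j
      unfold chi
      rw [Finset.sum_ite_eq univ (((j : ℤ) - i + c : ℤ) : ZMod e) (fun _ => (1:ℤ))]
      simp
    rw [Finset.sum_congr rfl (fun j _ => this j)]
    simp
  rw [size_eq p M hM]
  exact_mod_cast this

end StmtAux

namespace StmtAux
open Finset Partition'

variable (e : ℕ) (c : ℤ) (p : Partition')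

/-- β_i = parts i - 1 - i + c. -/
def beta (c : ℤ) (p : Partition') (i : ℕ) : ℤ := (p.parts i : ℤ) - 1 - i + c

lemma removable_ncard (f : ZMod e) (M : ℕ) (hM : ∀ i, M ≤ i → p.parts i = 0) :
    ((removableNodes e c p f).ncard : ℤ)
      = ∑ i ∈ range M, (if p.parts (i + 1) < p.parts i then chi e f (beta c p i) else 0) := by
  classical
  have hset : removableNodes e c p f
      = ↑(((range M).filter (fun i => p.parts (i + 1) < p.parts i ∧
            (((p.parts i : ℤ) - 1 - i + c : ℤ) : ZMod e) = f)).image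
          (fun i => (i, p.parts i - 1))) := by
    ext ⟨i, j⟩
    simp only [removableNodes, Partition'.cells, Set.mem_setOf_eq, coe_image, coe_filter,
      mem_range, Set.mem_image, Set.mem_setOf_eq]
    constructor
    · rintro ⟨hcell, hj, hle, hres⟩
      have hpos : 0 < p.parts i := by omega
      have hiM : i < M := by
        by_contra hi
        push_neg at hi
        rw [hM i hi] at hpos; omega
      refine ⟨i, ⟨hiM, by omega, ?_⟩, by simp; omega⟩
      have : ((j : ℤ)) = (p.parts i : ℤ) - 1 := by omega
      rw [← hres]
      congr 1
      omega
    · rintro ⟨i', ⟨hi', hlt, hres⟩, heq⟩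
      have hpos : 0 < p.parts i' := by omega
      obtain ⟨rfl, rfl⟩ : i' = i ∧ p.parts i' - 1 = j :=
        ⟨congrArg Prod.fst heq, congrArg Prod.snd heq⟩
      refine ⟨by omega, by omega, by omega, ?_⟩
      rw [← hres]
      congr 1
      omega
  rw [hset, Set.ncard_coe_finset,
    Finset.card_image_of_injective _ (fun a b h => (Prod.mk.injEq _ _ _ _).mp h |>.1),
    Finset.card_filter, Nat.cast_sum]
  refine Finset.sum_congr rfl (fun i _ => ?_)
  unfold chi beta
  by_cases h1 : p.parts (i + 1) < p.parts i <;>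
    by_cases h2 : (((p.parts i : ℤ) - 1 - i + c : ℤ) : ZMod e) = f <;>
    simp [h1, h2]

lemma addable_ncard (f : ZMod e) (M : ℕ) (hM : ∀ i, M ≤ i → p.parts i = 0) :
    ((addableNodes e c p f).ncard : ℤ)
      = ∑ i ∈ range (M + 1),
          (if (i = 0 ∨ p.parts i < p.parts (i - 1)) then chi e f (beta c p i + 1) else 0) := by
  classical
  have hset : addableNodes e c p f
      = ↑(((range (M + 1)).filter (fun i => (i = 0 ∨ p.parts i < p.parts (i - 1)) ∧
            (((p.parts i : ℤ) - i + c : ℤ) : ZMod e) = f)).image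
          (fun i => (i, p.parts i))) := by
    ext ⟨i, j⟩
    simp only [addableNodes, Set.mem_setOf_eq, coe_image, coe_filter, mem_range,
      Set.mem_image, Set.mem_setOf_eq]
    constructor
    · rintro ⟨hj, hcond, hres⟩
      have hiM : i < M + 1 := by
        by_contra hi
        push_neg at hi
        rcases hcond with h0 | hlt
        · omega
        · have h1 : p.parts i = 0 := hM i (by omega)
          have h2 : p.parts (i - 1) = 0 := hM (i - 1) (by omega)
          omega
      subst hj
      exact ⟨i, ⟨hiM, hcond, hres⟩, rfl⟩
    · rintro ⟨i', ⟨hi', hcond, hres⟩, heq⟩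
      obtain ⟨rfl, rfl⟩ : i' = i ∧ p.parts i' = j :=
        ⟨congrArg Prod.fst heq, congrArg Prod.snd heq⟩
      exact ⟨rfl, hcond, hres⟩
  rw [hset, Set.ncard_coe_finset,
    Finset.card_image_of_injective _ (fun a b h => (Prod.mk.injEq _ _ _ _).mp h |>.1),
    Finset.card_filter, Nat.cast_sum]
  refine Finset.sum_congr rfl (fun i _ => ?_)
  unfold chi beta
  have harg : (p.parts i : ℤ) - 1 - i + c + 1 = (p.parts i : ℤ) - i + c := by ring
  rw [harg]
  by_cases h1 : (i = 0 ∨ p.parts i < p.parts (i - 1)) <;>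
    by_cases h2 : (((p.parts i : ℤ) - i + c : ℤ) : ZMod e) = f <;>
    simp [h1, h2]

end StmtAux

namespace StmtAux
open Finset Partition'

variable (e : ℕ) (c : ℤ) (p : Partition')

lemma row_ident (f : ZMod e) (i m : ℕ) :
    2 * (∑ j ∈ range m, chi e f ((j : ℤ) - i + c))
        - (∑ j ∈ range m, chi e (f + 1) ((j : ℤ) - i + c))
        - (∑ j ∈ range m, chi e (f - 1) ((j : ℤ) - i + c))
      = chi e f ((m : ℤ) - 1 - i + c) - chi e f ((m : ℤ) - i + c)
        - chi e f (c - i - 1) + chi e f (c - i) := by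
  induction m with
  | zero =>
    simp only [Finset.range_zero, Finset.sum_empty, mul_zero, sub_zero, Nat.cast_zero]
    rw [show (0 : ℤ) - 1 - (i : ℤ) + c = c - i - 1 by ring,
      show (0 : ℤ) - (i : ℤ) + c = c - i by ring]
    ring
  | succ m ih =>
    rw [Finset.sum_range_succ, Finset.sum_range_succ, Finset.sum_range_succ,
      chi_succ, chi_pred]
    push_cast
    rw [show (m : ℤ) + 1 - 1 - (i : ℤ) + c = (m : ℤ) - i + c by ring,
      show (m : ℤ) - (i : ℤ) + c - 1 = (m : ℤ) - 1 - i + c by ring,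
      show (m : ℤ) - (i : ℤ) + c + 1 = (m : ℤ) + 1 - i + c by ring]
    linarith [ih]

lemma key (f : ZMod e) :
    ((removableNodes e c p f).ncard : ℤ) - ((addableNodes e c p f).ncard : ℤ)
      = 2 * (resCount e c p f : ℤ) - (resCount e c p (f + 1) : ℤ)
          - (resCount e c p (f - 1) : ℤ) - chi e f c := by
  classical
  obtain ⟨M, hM⟩ := p.finite_support
  have hM1 : ∀ i, M + 1 ≤ i → p.parts i = 0 := fun i hi => hM i (by omega)
  set v : ℕ → ℤ := fun k =>
    if p.parts (k + 1) = p.parts k then chi e f (beta c p (k + 1) + 1) else 0 with hv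
  -- removable side
  have hR : ((removableNodes e c p f).ncard : ℤ)
      = ∑ i ∈ range (M + 1), (chi e f (beta c p i) - v i) := by
    rw [removable_ncard e c p f (M + 1) hM1]
    refine Finset.sum_congr rfl (fun i _ => ?_)
    have hle : p.parts (i + 1) ≤ p.parts i := p.antitone (Nat.le_succ i)
    by_cases h : p.parts (i + 1) < p.parts i
    · rw [if_pos h, hv]
      simp only []
      rw [if_neg (by omega)]
      ring
    · have heq : p.parts (i + 1) = p.parts i := by omega
      rw [if_neg h, hv]
      simp only []
      rw [if_pos heq]
      have hb : beta c p (i + 1) + 1 = beta c p i := by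
        unfold beta; rw [heq]; push_cast; ring
      rw [hb]; ring
  -- addable side
  have hA : ((addableNodes e c p f).ncard : ℤ)
      = ∑ i ∈ range (M + 1), (chi e f (beta c p i + 1))
          - ∑ i ∈ range M, v i := by
    rw [addable_ncard e c p f M hM]
    have step : ∀ i, (if (i = 0 ∨ p.parts i < p.parts (i - 1))
          then chi e f (beta c p i + 1) else 0)
        = chi e f (beta c p i + 1)
          - (if (i ≠ 0 ∧ p.parts i = p.parts (i - 1)) then chi e f (beta c p i + 1) else 0) := by
      intro i
      rcases Nat.eq_zero_or_pos i with h0 | hpos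
      · rw [if_pos (Or.inl h0), if_neg (by simp [h0])]; ring
      · have hle := p.antitone (Nat.sub_le i 1)
        by_cases h : p.parts i < p.parts (i - 1)
        · rw [if_pos (Or.inr h), if_neg (by omega)]; ring
        · have heq : p.parts i = p.parts (i - 1) := by omega
          rw [if_neg (by omega), if_pos ⟨by omega, heq⟩]; ring
    rw [Finset.sum_congr rfl (fun i _ => step i), Finset.sum_sub_distrib]
    congr 1
    rw [Finset.sum_range_succ']
    have h0 : (if ((0:ℕ) ≠ 0 ∧ p.parts 0 = p.parts (0 - 1)) then chi e f (beta c p 0 + 1) else 0)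
        = 0 := by simp
    rw [h0, add_zero]
    refine Finset.sum_congr rfl (fun i _ => ?_)
    have : (i + 1 : ℕ) - 1 = i := by omega
    rw [hv]
    simp only [this, ne_eq, Nat.succ_ne_zero, not_false_iff, true_and]
  -- value of v M
  have hvM : v M = chi e f (c - (M : ℤ) - 1) := by
    rw [hv]
    simp only []
    rw [if_pos (by rw [hM (M+1) (by omega), hM M (by omega)])]
    congr 1
    unfold beta
    rw [hM (M + 1) (by omega)]
    push_cast
    ring
  -- residue counts
  have hC : ∀ g : ZMod e, (resCount e c p g : ℤ)
      = ∑ i ∈ range (M + 1), ∑ j ∈ range (p.parts i), chi e g ((j : ℤ) - i + c) :=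
    fun g => resCount_eq e c p g (M + 1) hM1
  have hRHS : 2 * (resCount e c p f : ℤ) - (resCount e c p (f + 1) : ℤ)
        - (resCount e c p (f - 1) : ℤ)
      = ∑ i ∈ range (M + 1), (chi e f (beta c p i) - chi e f (beta c p i + 1))
          - (chi e f (c - (M : ℤ) - 1) - chi e f c) := by
    rw [hC f, hC (f + 1), hC (f - 1), Finset.mul_sum, ← Finset.sum_sub_distrib,
      ← Finset.sum_sub_distrib]
    have hrow : ∀ i ∈ range (M + 1),
        2 * (∑ j ∈ range (p.parts i), chi e f ((j : ℤ) - i + c))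
            - (∑ j ∈ range (p.parts i), chi e (f + 1) ((j : ℤ) - i + c))
            - (∑ j ∈ range (p.parts i), chi e (f - 1) ((j : ℤ) - i + c))
        = (chi e f (beta c p i) - chi e f (beta c p i + 1))
            - (chi e f (c - (i + 1 : ℕ)) - chi e f (c - (i : ℕ))) := by
      intro i _
      rw [row_ident]
      unfold beta
      rw [show (p.parts i : ℤ) - 1 - i + c + 1 = (p.parts i : ℤ) - i + c by ring,
        show c - ((i : ℕ) + 1 : ℕ) = c - (i : ℤ) - 1 by push_cast; ring]
      ring
    rw [Finset.sum_congr rfl hrow, Finset.sum_sub_distrib]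
    congr 1
    rw [Finset.sum_range_sub (fun k : ℕ => chi e f (c - (k : ℕ))) (M + 1)]
    simp only [Nat.cast_zero, sub_zero, Nat.cast_add, Nat.cast_one]
    rw [show c - ((M : ℤ) + 1) = c - (M : ℤ) - 1 by ring]
  -- combine
  rw [hR, hA]
  rw [Finset.sum_range_succ (fun i => chi e f (beta c p i) - v i) M] at *
  have hsub : ∑ i ∈ range M, (chi e f (beta c p i) - v i)
      = ∑ i ∈ range M, chi e f (beta c p i) - ∑ i ∈ range M, v i :=
    Finset.sum_sub_distrib _ _
  have hB1 : ∑ i ∈ range (M + 1), chi e f (beta c p i + 1)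
      = ∑ i ∈ range M, chi e f (beta c p i + 1) + chi e f (beta c p M + 1) :=
    Finset.sum_range_succ _ M
  have hT : ∑ i ∈ range (M + 1), (chi e f (beta c p i) - chi e f (beta c p i + 1))
      = ∑ i ∈ range M, chi e f (beta c p i) + chi e f (beta c p M)
        - (∑ i ∈ range M, chi e f (beta c p i + 1) + chi e f (beta c p M + 1)) := by
    rw [Finset.sum_sub_distrib, Finset.sum_range_succ, Finset.sum_range_succ]
  linarith [hRHS, hsub, hvM, hT, hB1]
end StmtAux

namespace StmtAux
open Finset Partition'

lemma mkey (e r : ℕ) (c : Fin r → ℤ) (lam : Fin r → Partition') (f : ZMod e) :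
    hub e r c lam f
      = 2 * (mresCount e r c lam f : ℤ) - (mresCount e r c lam (f + 1) : ℤ)
        - (mresCount e r c lam (f - 1) : ℤ) - ∑ a : Fin r, chi e f (c a) := by
  have hcast : ∀ g : ZMod e, (mresCount e r c lam g : ℤ)
      = ∑ a : Fin r, (resCount e (c a) (lam a) g : ℤ) := by
    intro g; unfold Partition'.mresCount; push_cast; rfl
  rw [hcast f, hcast (f + 1), hcast (f - 1), Finset.mul_sum, ← Finset.sum_sub_distrib,
    ← Finset.sum_sub_distrib, ← Finset.sum_sub_distrib]
  exact Finset.sum_congr rfl fun a _ => key e (c a) (lam a) f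

lemma msum (e r : ℕ) [NeZero e] (c : Fin r → ℤ) (lam : Fin r → Partition') :
    ∑ f : ZMod e, (mresCount e r c lam f : ℤ) = (msize r lam : ℤ) := by
  unfold Partition'.mresCount Partition'.msize
  push_cast
  rw [Finset.sum_comm]
  refine Finset.sum_congr rfl fun a _ => ?_
  exact_mod_cast congrArg (Nat.cast (R := ℤ)) (sum_resCount e (c a) (lam a))

end StmtAux

/-- Two multipartitions of `n` have the same residue counts `C_f` for all `f ∈ ℤ/eℤ` if and
only if they have the same hub. -/
theorem stmt14 (e r n : ℕ) (he : 2 ≤ e) (c : Fin r → ℤ) (lam mu : Fin r → Partition')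
    (h1 : Partition'.msize r lam = n) (h2 : Partition'.msize r mu = n) :
    (∀ f : ZMod e, Partition'.mresCount e r c lam f = Partition'.mresCount e r c mu f)
      ↔ (∀ f : ZMod e, Partition'.hub e r c lam f = Partition'.hub e r c mu f) := by
  haveI : NeZero e := ⟨by omega⟩
  constructor
  · intro h f
    rw [StmtAux.mkey e r c lam f, StmtAux.mkey e r c mu f, h f, h (f + 1), h (f - 1)]
  · intro h f
    set d : ZMod e → ℤ := fun g =>
      (Partition'.mresCount e r c lam g : ℤ) - Partition'.mresCount e r c mu g with hd
    have hlin : ∀ g, 2 * d g = d (g + 1) + d (g - 1) := by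
      intro g
      have hk1 := StmtAux.mkey e r c lam g
      have hk2 := StmtAux.mkey e r c mu g
      have hg := h g
      rw [hk1, hk2] at hg
      simp only [hd]
      linarith
    have hsum : ∑ g : ZMod e, d g = 0 := by
      simp only [hd]
      rw [Finset.sum_sub_distrib, StmtAux.msum, StmtAux.msum, h1, h2, sub_self]
    have hzero := StmtAux.harmonic_zero e d hlin hsum f
    simp only [hd] at hzero
    omega
end
end

section
/- If e is finite and multipartitions λ of n and μ of m have the same hub, then n ≡ m (mod e) and Wt(λ) − Wt(μ) = r(n−m)/e, where Wt(λ) = Σ_{a=1}^r C_{c_a}(λ) − (1/2) Σ_{f ∈ Z/eZ} (C_f(λ) − C_{f+1}(λ))^2. -/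
noncomputable section

section StmtAux

open Finset

variable {e : ℕ} [NeZero e]

/-- Integer indicator that `k` has residue `g` mod `e`. -/
private def χ (e : ℕ) [NeZero e] (g : ZMod e) (k : ℤ) : ℤ :=
  if ((k : ZMod e) = g) then 1 else 0

private lemma chi_succ (g : ZMod e) (k : ℤ) : χ e g (k + 1) = χ e (g - 1) k := by
  have h : (((k + 1 : ℤ) : ZMod e) = g) ↔ ((k : ZMod e) = g - 1) := by
    push_cast
    rw [eq_sub_iff_add_eq]
  simp only [χ, h]

private lemma chi_pred (g : ZMod e) (k : ℤ) : χ e g (k - 1) = χ e (g + 1) k := by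
  have := chi_succ (e := e) (g + 1) (k - 1)
  simp only [add_sub_cancel_right, sub_add_cancel] at this
  exact this.symm

private lemma sum_ind_range_e (t : ZMod e) :
    ∑ j ∈ range e, (if ((j : ℕ) : ZMod e) = t then (1 : ℤ) else 0) = 1 := by
  have hfil : (range e).filter (fun j => ((j : ℕ) : ZMod e) = t) = {t.val} := by
    ext j
    simp only [mem_filter, mem_range, mem_singleton]
    constructor
    · rintro ⟨hj, h⟩
      rw [← ZMod.val_cast_of_lt hj, h]
    · rintro rfl
      exact ⟨ZMod.val_lt t, ZMod.natCast_rightInverse t⟩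
  rw [Finset.sum_boole, hfil, Finset.card_singleton]
  norm_num

private lemma sum_chi_mult (g : ZMod e) (x : ℤ) (k : ℕ) :
    ∑ i ∈ range (e * k), χ e g (x - i) = k := by
  induction k with
  | zero => simp
  | succ k ih =>
    rw [Nat.mul_succ, Finset.sum_range_add, ih]
    have hblock : ∀ j ∈ range e,
        χ e g (x - ((e * k + j : ℕ) : ℤ)) =
          (if ((j : ℕ) : ZMod e) = ((x : ZMod e) - g) then (1 : ℤ) else 0) := by
      intro j _
      have h1 : (((x - ((e * k + j : ℕ) : ℤ)) : ℤ) : ZMod e) = (x : ZMod e) - j := by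
        push_cast
        rw [ZMod.natCast_self]
        ring
      have h2 : ((x : ZMod e) - j = g) ↔ (((j : ℕ) : ZMod e) = (x : ZMod e) - g) := by
        constructor
        · intro h; rw [← h, sub_sub_cancel]
        · intro h; rw [h, sub_sub_cancel]
      simp only [χ, h1, h2]
    rw [Finset.sum_congr rfl hblock, sum_ind_range_e]
    push_cast
    ring

private lemma chi_sum_over_res (k : ℤ) : ∑ g : ZMod e, χ e g k = 1 := by
  simp [χ, Finset.sum_ite_eq]

/-- `resCount` as an explicit double sum. -/
private lemma resCount_eq (c : ℤ) (p : Partition') (f : ZMod e) {N : ℕ}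
    (hN : ∀ i, N ≤ i → p.parts i = 0) :
    (Partition'.resCount e c p f : ℤ) =
      ∑ i ∈ range N, ∑ j ∈ range (p.parts i), χ e f ((j : ℤ) - i + c) := by
  classical
  set M := p.parts 0 with hM
  have hset : {x ∈ p.cells | (((x.2 : ℤ) - x.1 + c : ℤ) : ZMod e) = f} =
      ↑((range N ×ˢ range M).filter
        (fun x => x.2 < p.parts x.1 ∧ (((x.2 : ℤ) - x.1 + c : ℤ) : ZMod e) = f)) := by
    ext ⟨i, j⟩
    simp only [Set.mem_sep_iff, Partition'.cells, Set.mem_setOf_eq, Finset.coe_filter,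
      Finset.mem_product, Finset.mem_range]
    constructor
    · rintro ⟨hc, hr⟩
      have hi : i < N := by
        by_contra h
        push_neg at h
        rw [hN i h] at hc
        omega
      have hj : j < M := lt_of_lt_of_le hc (p.antitone (Nat.zero_le i))
      exact ⟨⟨hi, hj⟩, hc, hr⟩
    · rintro ⟨_, hc, hr⟩
      exact ⟨hc, hr⟩
  rw [Partition'.resCount, hset, Set.ncard_coe_finset, Finset.card_filter,
    Finset.sum_product]
  push_cast
  refine Finset.sum_congr rfl (fun i _ => ?_)
  have hsub : range (p.parts i) ⊆ range M := by
    intro j hj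
    rw [mem_range] at *
    exact lt_of_lt_of_le hj (p.antitone (Nat.zero_le i))
  rw [← Finset.sum_subset hsub]
  · refine Finset.sum_congr rfl (fun j hj => ?_)
    rw [mem_range] at hj
    simp only [χ, hj, true_and]
    push_cast
    rfl
  · intro j _ hj
    rw [mem_range] at hj
    simp only [hj, false_and, if_false]

/-- `size` as a sum of parts. -/
private lemma size_eq (p : Partition') {N : ℕ}
    (hN : ∀ i, N ≤ i → p.parts i = 0) :
    (p.size : ℤ) = ∑ i ∈ range N, (p.parts i : ℤ) := by
  classical
  set M := p.parts 0 with hM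
  have hset : p.cells =
      ↑((range N ×ˢ range M).filter (fun x => x.2 < p.parts x.1)) := by
    ext ⟨i, j⟩
    simp only [Partition'.cells, Set.mem_setOf_eq, Finset.coe_filter,
      Finset.mem_product, Finset.mem_range]
    constructor
    · intro hc
      have hi : i < N := by
        by_contra h
        push_neg at h
        rw [hN i h] at hc
        omega
      have hj : j < M := lt_of_lt_of_le hc (p.antitone (Nat.zero_le i))
      exact ⟨⟨hi, hj⟩, hc⟩
    · rintro ⟨_, hc⟩
      exact hc
  rw [Partition'.size, hset, Set.ncard_coe_finset, Finset.card_filter,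
    Finset.sum_product]
  push_cast
  refine Finset.sum_congr rfl (fun i _ => ?_)
  have hsub : range (p.parts i) ⊆ range M := by
    intro j hj
    rw [mem_range] at *
    exact lt_of_lt_of_le hj (p.antitone (Nat.zero_le i))
  rw [← Finset.sum_subset hsub]
  · rw [Finset.sum_congr rfl (fun j hj => ?_), Finset.sum_const, Finset.card_range,
      nsmul_eq_mul, mul_one]
    rw [mem_range] at hj
    simp [hj]
  · intro j _ hj
    rw [mem_range] at hj
    simp [hj]

/-- Removable-node count as an explicit sum. -/
private lemma removable_eq (c : ℤ) (p : Partition') (f : ZMod e) {N : ℕ}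
    (hN : ∀ i, N ≤ i → p.parts i = 0) :
    ((Partition'.removableNodes e c p f).ncard : ℤ) =
      ∑ i ∈ range N, (if (p.parts (i + 1) < p.parts i ∧
        (((p.parts i : ℤ) - 1 - i + c : ℤ) : ZMod e) = f) then (1 : ℤ) else 0) := by
  classical
  have hset : Partition'.removableNodes e c p f =
      ↑((((range N).filter (fun i => p.parts (i + 1) < p.parts i ∧
          (((p.parts i : ℤ) - 1 - i + c : ℤ) : ZMod e) = f)).image
        (fun i => (i, p.parts i - 1)))) := by
    ext ⟨i, j⟩
    simp only [Partition'.removableNodes, Partition'.cells, Set.mem_setOf_eq,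
      Finset.coe_image, Set.mem_image, Finset.mem_coe, mem_filter, mem_range]
    constructor
    · rintro ⟨hc, hrow, hrem, hres⟩
      have hi : i < N := by
        by_contra h
        push_neg at h
        rw [hN i h] at hc
        omega
      have hj : ((j : ℕ) : ℤ) = (p.parts i : ℤ) - 1 := by omega
      rw [hj] at hres
      exact ⟨i, ⟨hi, by omega, hres⟩, by simp; omega⟩
    · rintro ⟨a, ⟨ha, hlt, hres⟩, heq⟩
      have h1 : p.parts a ≥ 1 := by omega
      obtain ⟨rfl, rfl⟩ : a = i ∧ p.parts a - 1 = j := by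
        constructor <;> [exact (Prod.mk.injEq _ _ _ _ ▸ heq).1;
          exact (Prod.mk.injEq _ _ _ _ ▸ heq).2]
      refine ⟨by omega, by omega, by omega, ?_⟩
      have hj : ((p.parts a - 1 : ℕ) : ℤ) = (p.parts a : ℤ) - 1 := by omega
      rw [hj]
      exact hres
  rw [hset, Set.ncard_coe_finset,
    Finset.card_image_of_injective _ (fun a b h => (Prod.mk.injEq _ _ _ _ ▸ h).1),
    Finset.card_filter]
  push_cast
  rfl

/-- Addable-node count as an explicit sum. -/
private lemma addable_eq (c : ℤ) (p : Partition') (f : ZMod e) {N : ℕ}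
    (hN : ∀ i, N ≤ i → p.parts i = 0) :
    ((Partition'.addableNodes e c p f).ncard : ℤ) =
      ∑ i ∈ range (N + 1), (if ((i = 0 ∨ p.parts i < p.parts (i - 1)) ∧
        (((p.parts i : ℤ) - i + c : ℤ) : ZMod e) = f) then (1 : ℤ) else 0) := by
  classical
  have hset : Partition'.addableNodes e c p f =
      ↑((((range (N + 1)).filter (fun i => (i = 0 ∨ p.parts i < p.parts (i - 1)) ∧
          (((p.parts i : ℤ) - i + c : ℤ) : ZMod e) = f)).image
        (fun i => (i, p.parts i)))) := by
    ext ⟨i, j⟩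
    simp only [Partition'.addableNodes, Set.mem_setOf_eq,
      Finset.coe_image, Set.mem_image, Finset.mem_coe, mem_filter, mem_range]
    constructor
    · rintro ⟨hcol, hcorner, hres⟩
      subst hcol
      have hi : i < N + 1 := by
        by_contra h
        push_neg at h
        rcases hcorner with h0 | hlt
        · omega
        · have : p.parts (i - 1) = 0 := hN _ (by omega)
          omega
      exact ⟨i, ⟨hi, hcorner, hres⟩, rfl⟩
    · rintro ⟨a, ⟨ha, hcorner, hres⟩, heq⟩
      obtain ⟨rfl, rfl⟩ : a = i ∧ p.parts a = j := by
        constructor <;> [exact (Prod.mk.injEq _ _ _ _ ▸ heq).1;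
          exact (Prod.mk.injEq _ _ _ _ ▸ heq).2]
      exact ⟨rfl, hcorner, hres⟩
  rw [hset, Set.ncard_coe_finset,
    Finset.card_image_of_injective _ (fun a b h => (Prod.mk.injEq _ _ _ _ ▸ h).1),
    Finset.card_filter]
  push_cast
  rfl

/-- The fundamental single-partition identity:
`#removable − #addable = 2 C_f − C_{f−1} − C_{f+1} − [f = c]`. -/
private lemma key_identity (c : ℤ) (p : Partition') (f : ZMod e) :
    ((Partition'.removableNodes e c p f).ncard : ℤ)
        - ((Partition'.addableNodes e c p f).ncard : ℤ)
      = 2 * (Partition'.resCount e c p f : ℤ)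
        - (Partition'.resCount e c p (f - 1) : ℤ)
        - (Partition'.resCount e c p (f + 1) : ℤ)
        - (if f = (c : ZMod e) then 1 else 0) := by
  classical
  obtain ⟨N₀, hN₀⟩ := p.finite_support
  have he1 : 1 ≤ e := NeZero.one_le
  set N : ℕ := e * (N₀ + 1) with hNdef
  have hNN₀ : N₀ ≤ N := by
    calc N₀ ≤ 1 * (N₀ + 1) := by omega
    _ ≤ e * (N₀ + 1) := Nat.mul_le_mul_right _ he1
  have hN : ∀ i, N ≤ i → p.parts i = 0 := fun i hi => hN₀ i (le_trans hNN₀ hi)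
  set b : ℕ → ℤ := fun i => (p.parts i : ℤ) - i + c with hbdef
  -- Step 1: express the second difference of resCounts as a telescoping sum.
  have hrow : ∀ i : ℕ, ∑ j ∈ range (p.parts i),
      (2 * χ e f ((j : ℤ) - i + c) - χ e (f - 1) ((j : ℤ) - i + c)
        - χ e (f + 1) ((j : ℤ) - i + c))
      = (χ e f (c - i) - χ e (f + 1) (c - i)) - (χ e f (b i) - χ e (f + 1) (b i)) := by
    intro i
    have htel := Finset.sum_range_sub'
      (fun j => χ e f ((c - i) + j) - χ e (f + 1) ((c - i) + j)) (p.parts i)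
    have hb : (c - (i : ℤ)) + (p.parts i : ℕ) = b i := by simp [hbdef]; ring
    rw [hb] at htel
    simp only [Nat.cast_zero, add_zero] at htel
    rw [← htel]
    refine Finset.sum_congr rfl (fun j _ => ?_)
    have h1 : ((j : ℤ) - i + c) = (c - i) + j := by ring
    have h2 : ((c - (i : ℤ)) + ((j : ℕ) + 1 : ℕ)) = ((c - i) + j) + 1 := by push_cast; ring
    rw [h1, h2, chi_succ f ((c - (i:ℤ)) + j), chi_succ (f + 1) ((c - (i:ℤ)) + j)]
    simp only [add_sub_cancel_right]
    try ring
  have hC : 2 * (Partition'.resCount e c p f : ℤ)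
      - (Partition'.resCount e c p (f - 1) : ℤ)
      - (Partition'.resCount e c p (f + 1) : ℤ)
      = ∑ i ∈ range N, ((χ e f (c - i) - χ e (f + 1) (c - i))
          - (χ e f (b i) - χ e (f + 1) (b i))) := by
    rw [resCount_eq c p f hN, resCount_eq c p (f - 1) hN, resCount_eq c p (f + 1) hN,
      Finset.mul_sum, ← Finset.sum_sub_distrib, ← Finset.sum_sub_distrib]
    refine Finset.sum_congr rfl (fun i _ => ?_)
    rw [Finset.mul_sum, ← Finset.sum_sub_distrib, ← Finset.sum_sub_distrib]
    exact hrow i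
  -- Step 2: removable / addable sums.
  have hA := addable_eq c p f hN
  rw [Finset.sum_range_succ'] at hA
  have hA0 : (if ((0 = 0 ∨ p.parts 0 < p.parts (0 - 1)) ∧
      (((p.parts 0 : ℤ) - (0 : ℕ) + c : ℤ) : ZMod e) = f) then (1:ℤ) else 0)
      = χ e f (b 0) := by
    simp only [χ, hbdef]
    norm_num
  rw [hA0] at hA
  have hA1 : ∀ i ∈ range N, (if (((i + 1 : ℕ) = 0 ∨ p.parts (i + 1) < p.parts ((i + 1) - 1)) ∧
      (((p.parts (i + 1) : ℤ) - ((i + 1 : ℕ) : ℤ) + c : ℤ) : ZMod e) = f) then (1:ℤ) else 0)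
      = (if (p.parts (i + 1) < p.parts i ∧ ((b (i + 1) : ℤ) : ZMod e) = f)
          then (1:ℤ) else 0) := by
    intro i _
    have h1 : ((i + 1 : ℕ) = 0 ∨ p.parts (i + 1) < p.parts ((i + 1) - 1))
        ↔ p.parts (i + 1) < p.parts i := by
      simp only [Nat.add_sub_cancel]
      omega
    have h2 : ((p.parts (i + 1) : ℤ) - ((i + 1 : ℕ) : ℤ) + c) = b (i + 1) := by
      show (p.parts (i + 1) : ℤ) - ((i + 1 : ℕ) : ℤ) + c = (p.parts (i+1) : ℤ) - ((i+1 : ℕ) : ℤ) + c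
      rfl
    rw [h2]
    simp only [h1]
  rw [Finset.sum_congr rfl hA1] at hA
  have hR := removable_eq c p f hN
  have hR1 : ∀ i ∈ range N, (if (p.parts (i + 1) < p.parts i ∧
      (((p.parts i : ℤ) - 1 - i + c : ℤ) : ZMod e) = f) then (1:ℤ) else 0)
      = (if (p.parts (i + 1) < p.parts i ∧ (((b i - 1 : ℤ)) : ZMod e) = f)
          then (1:ℤ) else 0) := by
    intro i _
    have h2 : ((p.parts i : ℤ) - 1 - i + c) = b i - 1 := by simp [hbdef]; ring
    rw [h2]
  rw [Finset.sum_congr rfl hR1] at hR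
  -- Step 3: per-row combination.
  have hrowfinal : ∀ i ∈ range N,
      ((if (p.parts (i + 1) < p.parts i ∧ (((b i - 1 : ℤ)) : ZMod e) = f)
          then (1:ℤ) else 0)
        - (if (p.parts (i + 1) < p.parts i ∧ ((b (i + 1) : ℤ) : ZMod e) = f)
          then (1:ℤ) else 0))
      - (((χ e f (c - i) - χ e (f + 1) (c - i)) - (χ e f (b i) - χ e (f + 1) (b i))))
      = (χ e f (b i) - χ e f (b (i + 1)))
        - (χ e f (c - i) - χ e (f + 1) (c - i)) := by
    intro i _
    have hble : p.parts (i + 1) ≤ p.parts i := p.antitone (Nat.le_succ i)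
    have hkey : χ e (f + 1) (b i) = χ e f (b i - 1) := (chi_pred f (b i)).symm
    rcases lt_or_eq_of_le hble with hlt | heq
    · simp only [hlt, true_and, if_pos]
      simp only [χ] at *
      rw [hkey] at *
      ring
    · have hbeq : b (i + 1) = b i - 1 := by
        simp only [hbdef, ← heq]
        push_cast
        ring
      have hcond : ¬ p.parts (i + 1) < p.parts i := by omega
      simp only [hcond, false_and, if_false]
      rw [hbeq, hkey]
      ring
  -- Step 4: sum everything.
  have htel2 : ∑ i ∈ range N, (χ e f (b i) - χ e f (b (i + 1)))
      = χ e f (b 0) - χ e f (b N) := Finset.sum_range_sub' (fun i => χ e f (b i)) N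
  have hboundary : ∑ i ∈ range N, (χ e f (c - i) - χ e (f + 1) (c - i)) = 0 := by
    rw [Finset.sum_sub_distrib]
    rw [sum_chi_mult f c (N₀ + 1), sum_chi_mult (f + 1) c (N₀ + 1)]
    ring
  have hbN : χ e f (b N) = (if f = (c : ZMod e) then (1:ℤ) else 0) := by
    have h1 : p.parts N = 0 := hN N le_rfl
    have h2 : ((b N : ℤ) : ZMod e) = (c : ZMod e) := by
      simp only [hbdef, h1]
      rw [hNdef]
      push_cast
      rw [ZMod.natCast_self]
      ring
    simp only [χ, h2, eq_comm]
  -- Put it together.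
  rw [hR, hA, hC]
  have hsum := Finset.sum_congr rfl hrowfinal
  simp only [Finset.sum_sub_distrib] at hsum htel2 hboundary ⊢
  linarith [hsum, htel2, hboundary, hbN]

/-- Size of a partition as a sum of residue counts. -/
private lemma size_eq_sum_resCount (c : ℤ) (p : Partition') :
    (p.size : ℤ) = ∑ f : ZMod e, (Partition'.resCount e c p f : ℤ) := by
  obtain ⟨N, hN⟩ := p.finite_support
  have hmain : ∑ f : ZMod e, (Partition'.resCount e c p f : ℤ)
      = ∑ i ∈ range N, (p.parts i : ℤ) := by
    calc ∑ f : ZMod e, (Partition'.resCount e c p f : ℤ)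
        = ∑ f : ZMod e, ∑ i ∈ range N, ∑ j ∈ range (p.parts i),
            χ e f ((j : ℤ) - i + c) :=
          Finset.sum_congr rfl (fun f _ => resCount_eq c p f hN)
      _ = ∑ i ∈ range N, ∑ f : ZMod e, ∑ j ∈ range (p.parts i),
            χ e f ((j : ℤ) - i + c) := Finset.sum_comm
      _ = ∑ i ∈ range N, ∑ j ∈ range (p.parts i), ∑ f : ZMod e,
            χ e f ((j : ℤ) - i + c) :=
          Finset.sum_congr rfl (fun i _ => Finset.sum_comm)
      _ = ∑ i ∈ range N, ∑ j ∈ range (p.parts i), (1 : ℤ) :=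
          Finset.sum_congr rfl (fun i _ =>
            Finset.sum_congr rfl (fun j _ => chi_sum_over_res _))
      _ = ∑ i ∈ range N, (p.parts i : ℤ) := by simp
  rw [size_eq p hN, ← hmain]

/-- A function on `ZMod e` with vanishing second difference is constant. -/
private lemma const_of_secondDiff (D : ZMod e → ℤ)
    (h : ∀ f, 2 * D f - D (f - 1) - D (f + 1) = 0) : ∀ f, D f = D 0 := by
  have hstep : ∀ f, D (f + 1) - D f = D f - D (f - 1) := fun f => by linarith [h f]
  have hstep' : ∀ f : ZMod e, D (f + 1) - D f = D 1 - D 0 := by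
    have hk : ∀ k : ℕ, D ((k : ZMod e) + 1) - D (k : ZMod e) = D 1 - D 0 := by
      intro k
      induction k with
      | zero => simp
      | succ k ih =>
        have hs := hstep ((k : ZMod e) + 1)
        rw [add_sub_cancel_right] at hs
        push_cast
        rw [hs]
        exact ih
    intro f
    have hv := hk f.val
    rwa [ZMod.natCast_rightInverse f] at hv
  have hsum0 : ∑ f : ZMod e, (D (f + 1) - D f) = 0 := by
    rw [Finset.sum_sub_distrib,
      Fintype.sum_equiv (Equiv.addRight (1 : ZMod e)) (fun f => D (f + 1)) D
        (fun x => rfl), sub_self]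
  have hcard : ((e : ℤ)) * (D 1 - D 0) = 0 := by
    rw [← hsum0, Finset.sum_congr rfl (fun f _ => hstep' f), Finset.sum_const,
      Finset.card_univ, ZMod.card, nsmul_eq_mul]
  have hdelta : D 1 - D 0 = 0 := by
    rcases mul_eq_zero.mp hcard with hh | hh
    · exact absurd hh (by exact_mod_cast (NeZero.ne e))
    · exact hh
  have hDstep : ∀ f : ZMod e, D (f + 1) = D f := fun f => by linarith [hstep' f]
  have hk : ∀ k : ℕ, D (k : ZMod e) = D 0 := by
    intro k
    induction k with
    | zero => simp
    | succ k ih =>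
      push_cast
      rw [hDstep]
      exact ih
  intro f
  have hv := hk f.val
  rwa [ZMod.natCast_rightInverse f] at hv

private lemma hub_eq_mres (e r : ℕ) [NeZero e] (c : Fin r → ℤ) (nu : Fin r → Partition')
    (f : ZMod e) :
    Partition'.hub e r c nu f
      = 2 * (Partition'.mresCount e r c nu f : ℤ)
        - (Partition'.mresCount e r c nu (f - 1) : ℤ)
        - (Partition'.mresCount e r c nu (f + 1) : ℤ)
        - ∑ a : Fin r, (if f = ((c a : ZMod e)) then (1 : ℤ) else 0) := by
  rw [Partition'.hub, Finset.sum_congr rfl (fun a _ => key_identity (c a) (nu a) f)]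
  simp only [Partition'.mresCount]
  push_cast
  rw [Finset.mul_sum]
  simp only [Finset.sum_sub_distrib]

private lemma msize_eq_sum (e r : ℕ) [NeZero e] (c : Fin r → ℤ) (nu : Fin r → Partition') :
    (Partition'.msize r nu : ℤ) = ∑ f : ZMod e, (Partition'.mresCount e r c nu f : ℤ) := by
  simp only [Partition'.msize, Partition'.mresCount]
  push_cast
  rw [Finset.sum_congr rfl (fun a _ => size_eq_sum_resCount (e := e) (c a) (nu a)), Finset.sum_comm]

end StmtAux

/-- If multipartitions `λ` of `n` and `μ` of `m` have the same hub, then `n ≡ m (mod e)` and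
`Wt(λ) - Wt(μ) = r(n - m)/e`. -/
theorem stmt15 (e r n m : ℕ) [NeZero e] (he : 2 ≤ e) (c : Fin r → ℤ)
    (lam mu : Fin r → Partition')
    (hn : Partition'.msize r lam = n) (hm : Partition'.msize r mu = m)
    (hhub : ∀ f : ZMod e, Partition'.hub e r c lam f = Partition'.hub e r c mu f) :
    (e : ℤ) ∣ (n : ℤ) - m ∧
      Partition'.Wt e r c lam - Partition'.Wt e r c mu = (r : ℚ) * ((n : ℚ) - m) / e := by
  classical
  have hD2 : ∀ f : ZMod e,
      2 * ((Partition'.mresCount e r c lam f : ℤ) - (Partition'.mresCount e r c mu f : ℤ))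
        - ((Partition'.mresCount e r c lam (f - 1) : ℤ) - (Partition'.mresCount e r c mu (f - 1) : ℤ))
        - ((Partition'.mresCount e r c lam (f + 1) : ℤ) - (Partition'.mresCount e r c mu (f + 1) : ℤ))
      = 0 := by
    intro f
    have h1 := hub_eq_mres e r c lam f
    have h2 := hub_eq_mres e r c mu f
    have h3 := hhub f
    rw [h1, h2] at h3
    linarith
  have hDconst : ∀ f : ZMod e,
      (Partition'.mresCount e r c lam f : ℤ) - (Partition'.mresCount e r c mu f : ℤ)
        = (Partition'.mresCount e r c lam 0 : ℤ) - (Partition'.mresCount e r c mu 0 : ℤ) :=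
    const_of_secondDiff
      (fun f => (Partition'.mresCount e r c lam f : ℤ) - (Partition'.mresCount e r c mu f : ℤ))
      hD2
  set d : ℤ := (Partition'.mresCount e r c lam 0 : ℤ) - (Partition'.mresCount e r c mu 0 : ℤ)
    with hd
  have hsize : (n : ℤ) - m = (e : ℤ) * d := by
    rw [← hn, ← hm, msize_eq_sum e r c lam, msize_eq_sum e r c mu, ← Finset.sum_sub_distrib,
      Finset.sum_congr rfl (fun f _ => hDconst f), Finset.sum_const, Finset.card_univ,
      ZMod.card, nsmul_eq_mul]
  refine ⟨⟨d, hsize⟩, ?_⟩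
  have hQ : ∀ f : ZMod e, (Partition'.mresCount e r c lam f : ℚ)
      = (Partition'.mresCount e r c mu f : ℚ) + (d : ℚ) := by
    intro f
    have h := hDconst f
    have h2 : (Partition'.mresCount e r c lam f : ℚ) - (Partition'.mresCount e r c mu f : ℚ)
        = (d : ℚ) := by exact_mod_cast h
    linarith
  have hfirst : (∑ a : Fin r, (Partition'.mresCount e r c lam ((c a : ZMod e)) : ℚ))
      = (∑ a : Fin r, (Partition'.mresCount e r c mu ((c a : ZMod e)) : ℚ)) + r * (d : ℚ) := by
    rw [Finset.sum_congr rfl (fun a _ => hQ _), Finset.sum_add_distrib, Finset.sum_const,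
      Finset.card_univ, Fintype.card_fin, nsmul_eq_mul]
  have hq2 : ∑ f : ZMod e,
        ((Partition'.mresCount e r c lam f : ℚ) - (Partition'.mresCount e r c lam (f + 1) : ℚ)) ^ 2
      = ∑ f : ZMod e,
        ((Partition'.mresCount e r c mu f : ℚ) - (Partition'.mresCount e r c mu (f + 1) : ℚ)) ^ 2 :=
    Finset.sum_congr rfl (fun f _ => by rw [hQ f, hQ (f + 1)]; ring)
  have hnm : (n : ℚ) - m = (e : ℚ) * (d : ℚ) := by exact_mod_cast hsize
  have he0 : (e : ℚ) ≠ 0 := by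
    exact_mod_cast (NeZero.ne e)
  unfold Partition'.Wt
  rw [hq2, hfirst, hnm]
  field_simp
  ring
end
end

section
/- If a multipartition μ is obtained from a multipartition λ by wrapping on a single e-rim hook (onto any component), then Wt(μ) = Wt(λ) + r. -/
noncomputable section

namespace Partition'

lemma cells_finite (p : Partition') : p.cells.Finite := by
  obtain ⟨N, hN⟩ := p.finite_support
  apply Set.Finite.subset ((Set.finite_Iio N).prod (Set.finite_Iio (p.parts 0)))
  rintro ⟨i, j⟩ hx
  simp only [cells, Set.mem_setOf_eq] at hx
  simp only [Set.mem_prod, Set.mem_Iio]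
  constructor
  · by_contra hcon
    push_neg at hcon
    rw [hN i hcon] at hx
    omega
  · exact lt_of_lt_of_le hx (p.antitone (Nat.zero_le i))

/-- content of a cell -/
def ctZ (x : ℕ × ℕ) : ℤ := (x.2 : ℤ) - x.1

lemma no_diag {p q : Partition'} (hno : No2x2 (q.cells \ p.cells)) {i j d : ℕ} (hd : 0 < d)
    (h1 : (i, j) ∈ q.cells \ p.cells) (h2 : (i + d, j + d) ∈ q.cells \ p.cells) : False := by
  obtain ⟨h1q, h1p⟩ := h1
  obtain ⟨h2q, _⟩ := h2
  simp only [cells, Set.mem_setOf_eq] at h1q h1p h2q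
  have hq1 : q.parts (i + d) ≤ q.parts (i + 1) := q.antitone (by omega)
  have hq0 : q.parts (i + d) ≤ q.parts i := q.antitone (by omega)
  have hp1 : p.parts (i + 1) ≤ p.parts i := p.antitone (by omega)
  apply hno i j
  simp only [Set.mem_diff, cells, Set.mem_setOf_eq]
  omega

lemma ct_injOn {p q : Partition'} (hno : No2x2 (q.cells \ p.cells)) :
    Set.InjOn ctZ (q.cells \ p.cells) := by
  rintro ⟨i, j⟩ hx ⟨i', j'⟩ hy hct
  simp only [ctZ] at hct
  by_contra hne
  have hne' : ¬(i = i' ∧ j = j') := fun ⟨a, c⟩ => hne (by rw [a, c])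
  rcases Nat.lt_trichotomy i i' with h | h | h
  · have heq : (i + (i' - i), j + (i' - i)) = (i', j') := by
      simp only [Prod.mk.injEq]; omega
    exact no_diag hno (d := i' - i) (by omega) hx (heq ▸ hy)
  · exact hne' ⟨h, by omega⟩
  · have heq : (i' + (i - i'), j' + (i - i')) = (i, j) := by
      simp only [Prod.mk.injEq]; omega
    exact no_diag hno (d := i - i') (by omega) hy (heq ▸ hx)

lemma discrete_ivt (t : ℤ) : ∀ (n : ℕ) (f : ℕ → ℤ),
    (∀ k < n, f (k + 1) = f k + 1 ∨ f k = f (k + 1) + 1) →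
    f 0 ≤ t → t ≤ f n → ∃ k ≤ n, f k = t := by
  intro n
  induction n with
  | zero => exact fun f _ h1 h2 => ⟨0, le_refl _, le_antisymm h1 h2⟩
  | succ n ih =>
    intro f hstep h0 hn
    by_cases h : t ≤ f n
    · obtain ⟨k, hk, hfk⟩ := ih f (fun k hk => hstep k (by omega)) h0 h
      exact ⟨k, by omega, hfk⟩
    · push_neg at h
      have := hstep n (by omega)
      exact ⟨n + 1, le_refl _, by omega⟩

lemma resCount_rimHook (e : ℕ) [NeZero e] (c : ℤ) {p q : Partition'}
    (h : AddRimHook p q e) (f : ZMod e) :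
    resCount e c q f = resCount e c p f + 1 := by
  obtain ⟨hsub, hcard, hconn, hno⟩ := h
  set D := q.cells \ p.cells with hD
  have hDfin : D.Finite := (cells_finite q).subset Set.diff_subset
  have hepos : 0 < e := Nat.pos_of_ne_zero (NeZero.ne e)
  -- interval containment from connectivity
  have hIcc : ∀ x ∈ D, ∀ y ∈ D, Set.Icc (ctZ x) (ctZ y) ⊆ ctZ '' D := by
    intro x hx y hy t ht
    obtain ⟨n, g, hg0, hgn, hadj, hmem⟩ := hconn x hx y hy
    have hstep : ∀ k < n, ctZ (g (k + 1)) = ctZ (g k) + 1 ∨ ctZ (g k) = ctZ (g (k + 1)) + 1 := by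
      intro k hk
      rcases hadj k hk with ⟨h1, h2 | h2⟩ | ⟨h1, h2 | h2⟩ <;> simp only [ctZ] <;> omega
    obtain ⟨k, hk, hfk⟩ := discrete_ivt t n (fun k => ctZ (g k)) hstep
      (by show ctZ (g 0) ≤ t; rw [hg0]; exact ht.1)
      (by show t ≤ ctZ (g n); rw [hgn]; exact ht.2)
    exact ⟨g k, hmem k hk, hfk⟩
  -- contents of D lie within a window of size < e
  have hwin : ∀ x ∈ D, ∀ y ∈ D, ctZ x ≤ ctZ y → ctZ y - ctZ x < e := by
    intro x hx y hy hle
    have h1 : (Set.Icc (ctZ x) (ctZ y)).ncard ≤ e := by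
      calc (Set.Icc (ctZ x) (ctZ y)).ncard ≤ (ctZ '' D).ncard :=
            Set.ncard_le_ncard (hIcc x hx y hy) (hDfin.image _)
        _ ≤ D.ncard := Set.ncard_image_le hDfin
        _ = e := hcard
    have h2 : (Set.Icc (ctZ x) (ctZ y)).ncard = (ctZ y + 1 - ctZ x).toNat := by
      rw [← Finset.coe_Icc, Set.ncard_coe_finset, Int.card_Icc]
    omega
  -- residue map
  set R : ℕ × ℕ → ZMod e := fun x => (((x.2 : ℤ) - x.1 + c : ℤ) : ZMod e) with hR
  have hres_inj : Set.InjOn R D := by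
    intro x hx y hy hxy
    have hcast : ((ctZ x - ctZ y : ℤ) : ZMod e) = 0 := by
      simp only [hR] at hxy
      simp only [ctZ]
      push_cast at hxy ⊢
      linear_combination hxy
    have hdvd : (e : ℤ) ∣ ctZ x - ctZ y := (ZMod.intCast_zmod_eq_zero_iff_dvd _ e).mp hcast
    have habs : |ctZ x - ctZ y| < e := by
      rcases le_total (ctZ x) (ctZ y) with hle | hle
      · have := hwin x hx y hy hle; rw [abs_sub_comm]; rw [abs_of_nonneg (by omega)]; omega
      · have := hwin y hy x hx hle; rw [abs_of_nonneg (by omega)]; omega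
    have : ctZ x = ctZ y := by
      have := Int.eq_zero_of_abs_lt_dvd hdvd habs
      omega
    exact ct_injOn hno hx hy this
  -- image of residue map is everything
  have himg : R '' D = Set.univ := by
    apply Set.eq_of_subset_of_ncard_le (Set.subset_univ _)
    rw [Set.ncard_univ, Nat.card_eq_fintype_card, ZMod.card,
      Set.ncard_image_of_injOn hres_inj, hcard]
  -- exactly one cell of D of residue f
  have hone : {x ∈ D | R x = f}.ncard = 1 := by
    have hf : f ∈ R '' D := himg ▸ Set.mem_univ f
    obtain ⟨x0, hx0, hx0f⟩ := hf
    rw [Set.ncard_eq_one]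
    refine ⟨x0, ?_⟩
    ext y
    simp only [Set.mem_setOf_eq, Set.mem_singleton_iff]
    constructor
    · rintro ⟨hyD, hyf⟩
      exact hres_inj hyD hx0 (hyf.trans hx0f.symm)
    · rintro rfl
      exact ⟨hx0, hx0f⟩
  -- splitting
  have hsplit : {x ∈ q.cells | R x = f} = {x ∈ p.cells | R x = f} ∪ {x ∈ D | R x = f} := by
    ext x
    simp only [Set.mem_setOf_eq, Set.mem_union, hD, Set.mem_diff]
    constructor
    · rintro ⟨hxq, hxf⟩
      by_cases hxp : x ∈ p.cells
      · exact Or.inl ⟨hxp, hxf⟩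
      · exact Or.inr ⟨⟨hxq, hxp⟩, hxf⟩
    · rintro (⟨hxp, hxf⟩ | ⟨⟨hxq, _⟩, hxf⟩)
      · exact ⟨hsub hxp, hxf⟩
      · exact ⟨hxq, hxf⟩
  have hdisj : Disjoint {x ∈ p.cells | R x = f} {x ∈ D | R x = f} := by
    rw [Set.disjoint_left]
    rintro x ⟨hxp, _⟩ ⟨hxD, _⟩
    exact hxD.2 hxp
  show {x ∈ q.cells | R x = f}.ncard = {x ∈ p.cells | R x = f}.ncard + 1
  rw [hsplit, Set.ncard_union_eq hdisj ((cells_finite p).subset (Set.sep_subset _ _))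
    (hDfin.subset (Set.sep_subset _ _)), hone]

end Partition'

/-- If a multipartition `μ` is obtained from `λ` by wrapping on a single `e`-rim hook
(onto any component), then `Wt(μ) = Wt(λ) + r`. -/
theorem stmt16 (e r : ℕ) [NeZero e] (he : 2 ≤ e) (c : Fin r → ℤ)
    (lam mu : Fin r → Partition') (b : Fin r)
    (hother : ∀ a, a ≠ b → mu a = lam a)
    (hb : Partition'.AddRimHook (lam b) (mu b) e) :
    Partition'.Wt e r c mu = Partition'.Wt e r c lam + r := by
  have key : ∀ f : ZMod e,
      Partition'.mresCount e r c mu f = Partition'.mresCount e r c lam f + 1 := by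
    intro f
    unfold Partition'.mresCount
    have hcomp : ∀ a : Fin r, Partition'.resCount e (c a) (mu a) f
        = Partition'.resCount e (c a) (lam a) f + if a = b then 1 else 0 := by
      intro a
      by_cases hab : a = b
      · subst hab
        simp [Partition'.resCount_rimHook e (c a) hb]
      · simp [hab, hother a hab]
    rw [Finset.sum_congr rfl (fun a _ => hcomp a), Finset.sum_add_distrib]
    simp
  have keyQ : ∀ f : ZMod e,
      (Partition'.mresCount e r c mu f : ℚ) = Partition'.mresCount e r c lam f + 1 := by
    intro f
    rw [key f]
    push_cast
    ring
  unfold Partition'.Wt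
  simp only [keyQ]
  have h1 : ∑ a : Fin r, ((Partition'.mresCount e r c lam ((c a : ZMod e)) : ℚ) + 1)
      = (∑ a : Fin r, (Partition'.mresCount e r c lam ((c a : ZMod e)) : ℚ)) + r := by
    rw [Finset.sum_add_distrib]
    simp
  have h2 : ∑ f : ZMod e, (((Partition'.mresCount e r c lam f : ℚ) + 1)
        - ((Partition'.mresCount e r c lam (f + 1) : ℚ) + 1)) ^ 2
      = ∑ f : ZMod e, ((Partition'.mresCount e r c lam f : ℚ)
        - (Partition'.mresCount e r c lam (f + 1) : ℚ)) ^ 2 :=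
    Finset.sum_congr rfl fun f _ => by ring
  rw [h1, h2]
  ring
end
end

section
/- Let e ≥ 2 be finite and λ a partition containing nodes (i,m) and (i,j) in the same row with m < j. Suppose e divides the hook length h^λ_{(i,j)}. If μ is obtained from λ by unwrapping the rim hook r^λ_{(i,j)} and wrapping a rim hook of the same length back on with hand node in column m, in the manner corresponding to moving a bead on runner f down and another bead on runner f up (where f is the common foot residue), then e also divides the hook length h^λ_{(i,m)}. -/
noncomputable section

namespace Partition'

lemma mem_cells_iff (p : Partition') (x y : ℕ) : (x, y) ∈ p.cells ↔ y < p.parts x := Iff.rfl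

lemma lt_colLen_iff (p : Partition') (a b : ℕ) : a < p.colLen b ↔ b < p.parts a := by
  obtain ⟨N, hN⟩ := p.finite_support
  have hne : {i | p.parts i ≤ b}.Nonempty := ⟨N, by simp [hN N le_rfl]⟩
  set c := sInf {i | p.parts i ≤ b} with hc
  have hcm : p.parts c ≤ b := Nat.sInf_mem hne
  have hset : {i : ℕ | (i, b) ∈ p.cells} = Set.Iio c := by
    ext x
    simp only [Set.mem_setOf_eq, Set.mem_Iio, mem_cells_iff]
    constructor
    · intro hx
      by_contra h
      push_neg at h
      exact absurd (le_trans (p.antitone h) hcm) (not_le.2 hx)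
    · intro hx
      have hx' : x ∉ {i | p.parts i ≤ b} := Nat.notMem_of_lt_sInf hx
      simp only [Set.mem_setOf_eq, not_le] at hx'
      exact hx'
  have hcl : p.colLen b = c := by
    rw [colLen, hset, ← Finset.coe_Iio, Set.ncard_coe_finset, Nat.card_Iio]
  rw [hcl]
  constructor
  · intro h
    by_contra hb
    push_neg at hb
    have hmem : a ∈ {i | p.parts i ≤ b} := hb
    have := Nat.sInf_le hmem
    omega
  · intro h
    by_contra hh
    push_neg at hh
    exact absurd (le_trans (p.antitone hh) hcm) (not_le.2 h)

lemma mem_rimHook_iff (p : Partition') (a b x y : ℕ) :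
    (x, y) ∈ p.rimHook a b ↔ y < p.parts x ∧ a ≤ x ∧ b ≤ y ∧ p.parts (x + 1) ≤ y + 1 := by
  simp only [rimHook, Set.mem_setOf_eq, cells, not_lt]

lemma rimHook_subset (p : Partition') (a b : ℕ) : p.rimHook a b ⊆ p.cells := fun _ hx => hx.1

lemma ncard_rimHook (p : Partition') (a b : ℕ) (hab : (a, b) ∈ p.cells) :
    (p.rimHook a b).ncard = p.hookLen a b := by
  set C := p.colLen b with hC
  have haC : a < C := (p.lt_colLen_iff a b).2 hab
  have hba : b < p.parts a := hab
  set g : ℕ × ℕ → ℤ := fun z => (z.2 : ℤ) - z.1 with hg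
  set lo : ℤ := (b : ℤ) - ((C : ℤ) - 1) with hlo
  set hi : ℤ := (p.parts a : ℤ) - 1 - a with hhi
  have hmaps : ∀ z ∈ p.rimHook a b, g z ∈ Set.Icc lo hi := by
    rintro ⟨x, y⟩ hz
    rw [mem_rimHook_iff] at hz
    obtain ⟨h1, h2, h3, h4⟩ := hz
    have hxC : x < C := (p.lt_colLen_iff x b).2 (lt_of_le_of_lt h3 h1)
    have hpa : p.parts x ≤ p.parts a := p.antitone h2
    simp only [Set.mem_Icc, hg, hlo, hhi]
    omega
  have hinj : Set.InjOn g (p.rimHook a b) := by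
    rintro ⟨x, y⟩ hz ⟨x', y'⟩ hz' heq
    rw [mem_rimHook_iff] at hz hz'
    simp only [hg] at heq
    rcases lt_trichotomy x x' with h | h | h
    · exfalso
      have hm : p.parts x' ≤ p.parts (x + 1) := p.antitone (by omega)
      have := hz.2.2.2
      have := hz'.1
      omega
    · have : y = y' := by omega
      simp [h, this]
    · exfalso
      have hm : p.parts x ≤ p.parts (x' + 1) := p.antitone (by omega)
      have := hz'.2.2.2
      have := hz.1
      omega
  have hsurj : ∀ t ∈ Set.Icc lo hi, ∃ z ∈ p.rimHook a b, g z = t := by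
    intro t ht
    simp only [Set.mem_Icc, hlo, hhi] at ht
    obtain ⟨htlo, hthi⟩ := ht
    have hCb : p.parts C ≤ b := by
      by_contra h
      push_neg at h
      exact absurd ((p.lt_colLen_iff C b).2 h) (lt_irrefl C)
    have hT0 : (C - 1) ∈ {x : ℕ | (p.parts (x + 1) : ℤ) - (x + 1) - 1 < t} := by
      simp only [Set.mem_setOf_eq]
      have hc1 : C - 1 + 1 = C := by omega
      rw [hc1]
      omega
    set x0 := sInf {x : ℕ | (p.parts (x + 1) : ℤ) - (x + 1) - 1 < t} with hx0def
    have hx0 : (p.parts (x0 + 1) : ℤ) - (x0 + 1) - 1 < t := Nat.sInf_mem ⟨_, hT0⟩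
    have hx0le : x0 ≤ C - 1 := Nat.sInf_le hT0
    obtain ⟨x, hxa, hxx0, hxq⟩ : ∃ x, a ≤ x ∧ x0 ≤ x ∧ (x = a ∨ x = x0) := by
      rcases le_total a x0 with h | h
      · exact ⟨x0, h, le_rfl, Or.inr rfl⟩
      · exact ⟨a, le_rfl, h, Or.inl rfl⟩
    have hxmem : (p.parts (x + 1) : ℤ) - (x + 1) - 1 < t := by
      have hmono : p.parts (x + 1) ≤ p.parts (x0 + 1) := p.antitone (by omega)
      omega
    have hxub : t ≤ (p.parts x : ℤ) - x - 1 := by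
      rcases le_or_gt x0 a with h | h
      · have hxa' : x = a := by rcases hxq with rfl | rfl <;> omega
        rw [hxa']
        omega
      · have hxx0' : x = x0 := by rcases hxq with rfl | rfl <;> omega
        have hnm : x0 - 1 ∉ {x : ℕ | (p.parts (x + 1) : ℤ) - (x + 1) - 1 < t} :=
          Nat.notMem_of_lt_sInf (by omega)
        simp only [Set.mem_setOf_eq, not_lt] at hnm
        have hc1 : x0 - 1 + 1 = x0 := by omega
        rw [hc1] at hnm
        rw [hxx0']
        omega
    have hxC : x ≤ C - 1 := by rcases hxq with rfl | rfl <;> omega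
    have hyb : (b : ℤ) ≤ t + x := by
      rcases lt_or_ge (x + 1) C with h | h
      · have hb' : b < p.parts (x + 1) := (p.lt_colLen_iff (x + 1) b).1 h
        omega
      · omega
    refine ⟨(x, (t + x).toNat), ?_, ?_⟩
    · rw [mem_rimHook_iff]
      refine ⟨by omega, hxa, by omega, by omega⟩
    · simp only [hg]
      omega
  have himg : g '' (p.rimHook a b) = Set.Icc lo hi := by
    apply Set.Subset.antisymm
    · rintro t ⟨z, hz, rfl⟩
      exact hmaps z hz
    · intro t ht
      obtain ⟨z, hz, hgz⟩ := hsurj t ht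
      exact ⟨z, hz, hgz⟩
  have hcard := Set.ncard_image_of_injOn hinj
  rw [himg] at hcard
  rw [← hcard, ← Finset.coe_Icc, Set.ncard_coe_finset, Int.card_Icc]
  simp only [hookLen, ← hC, hhi, hlo]
  omega

end Partition'

/-- Let `λ` contain nodes `(i,m)` and `(i,j)` in the same row with `m < j`, and suppose
`e ∣ h^λ_{(i,j)}`.  If `μ` is obtained from `λ` by unwrapping the rim hook `r^λ_{(i,j)}` and
wrapping a rim hook of the same length back on with hand node in column `m`, in the manner
where the foot residues agree (corresponding to moving one bead down and another up on the
same runner `f`), then `e ∣ h^λ_{(i,m)}` as well. -/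
theorem stmt19 (e n : ℕ) (he : 2 ≤ e) (lam mu : Partition')
    (hn : lam.size = n) (hmn : mu.size = n)
    (i m j k l : ℕ)
    (hmcell : (i, m) ∈ lam.cells) (hjcell : (i, j) ∈ lam.cells) (hmj : m < j)
    (hdivj : e ∣ lam.hookLen i j)
    (hy : (k, l) ∈ mu.cells)
    (hrel : lam.cells \ lam.rimHook i j = mu.cells \ mu.rimHook k l)
    (hhand : mu.parts k = m + 1)
    (hres : Partition'.footRes e lam j = Partition'.footRes e mu l) :
    e ∣ lam.hookLen i m := by
  -- the two rim hooks have equal size, hence equal hook lengths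
  have hlamrim := lam.ncard_rimHook i j hjcell
  have hmurim := mu.ncard_rimHook k l hy
  have h1 : (lam.cells \ lam.rimHook i j).ncard + (lam.rimHook i j).ncard = lam.cells.ncard :=
    Set.ncard_diff_add_ncard_of_subset (lam.rimHook_subset i j) lam.cells_finite
  have h2 : (mu.cells \ mu.rimHook k l).ncard + (mu.rimHook k l).ncard = mu.cells.ncard :=
    Set.ncard_diff_add_ncard_of_subset (mu.rimHook_subset k l) mu.cells_finite
  rw [hrel] at h1
  have hsz1 : lam.cells.ncard = n := hn
  have hsz2 : mu.cells.ncard = n := hmn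
  have hookEq : lam.hookLen i j = mu.hookLen k l := by
    rw [hlamrim] at h1
    rw [hmurim] at h2
    omega
  -- basic numeric facts
  have hllt : l < mu.parts k := hy
  have hl : l ≤ m := by omega
  have hjlt : j < lam.parts i := hjcell
  have hmlt : m < lam.parts i := hmcell
  -- the column length of column m in lam equals k
  have hcol : lam.colLen m = k := by
    have hiff : ∀ a : ℕ, (a, m) ∈ lam.cells ↔ a < k := by
      intro a
      constructor
      · intro ha
        have hA : (a, m) ∈ lam.cells \ lam.rimHook i j := by
          refine ⟨ha, fun hr => ?_⟩
          rw [Partition'.mem_rimHook_iff] at hr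
          omega
        rw [hrel] at hA
        by_contra hk
        push_neg at hk
        apply hA.2
        rw [Partition'.mem_rimHook_iff]
        have hmono : mu.parts (a + 1) ≤ mu.parts k := mu.antitone (by omega)
        have hA1 : m < mu.parts a := hA.1
        omega
      · intro ha
        have hmono : mu.parts k ≤ mu.parts a := mu.antitone (by omega)
        have hmu : (a, m) ∈ mu.cells := by
          show m < mu.parts a
          omega
        have hA : (a, m) ∈ mu.cells \ mu.rimHook k l := by
          refine ⟨hmu, fun hr => ?_⟩
          rw [Partition'.mem_rimHook_iff] at hr
          omega
        rw [← hrel] at hA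
        exact hA.1
    have H : ∀ a : ℕ, a < lam.colLen m ↔ a < k := fun a =>
      (lam.lt_colLen_iff a m).trans ((lam.mem_cells_iff a m).symm.trans (hiff a))
    have Hk := H k
    have Hc := H (lam.colLen m)
    omega
  have hik : i < k := by
    rw [← hcol]
    exact (lam.lt_colLen_iff i m).2 hmcell
  have hij : i < lam.colLen j := (lam.lt_colLen_iff i j).2 hjcell
  have hkl : k < mu.colLen l := (mu.lt_colLen_iff k l).2 hy
  -- cast divisibilities to ℤ
  have d1 : (e : ℤ) ∣ ((lam.parts i : ℤ) + lam.colLen j - i - j - 1) := by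
    have hd := Int.natCast_dvd_natCast.2 hdivj
    have hcast : ((lam.hookLen i j : ℕ) : ℤ) =
        (lam.parts i : ℤ) + lam.colLen j - i - j - 1 := by
      simp only [Partition'.hookLen]
      omega
    rwa [hcast] at hd
  have d3 : (e : ℤ) ∣ ((mu.parts k : ℤ) + mu.colLen l - k - l - 1) := by
    have hd := Int.natCast_dvd_natCast.2 (hookEq ▸ hdivj)
    have hcast : ((mu.hookLen k l : ℕ) : ℤ) =
        (mu.parts k : ℤ) + mu.colLen l - k - l - 1 := by
      simp only [Partition'.hookLen]
      omega
    rwa [hcast] at hd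
  have d2 : (e : ℤ) ∣ (((j : ℤ) + 1 - lam.colLen j) - ((l : ℤ) + 1 - mu.colLen l)) := by
    have hz := hres
    rw [Partition'.footRes, Partition'.footRes, ← sub_eq_zero, ← Int.cast_sub,
      ZMod.intCast_zmod_eq_zero_iff_dvd] at hz
    exact_mod_cast hz
  have hh : (mu.parts k : ℤ) = (m : ℤ) + 1 := by exact_mod_cast hhand
  have dG : (e : ℤ) ∣ ((lam.parts i : ℤ) + k - i - m - 1) := by
    have heq : (lam.parts i : ℤ) + k - i - m - 1 =
        ((lam.parts i : ℤ) + lam.colLen j - i - j - 1)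
        + (((j : ℤ) + 1 - lam.colLen j) - ((l : ℤ) + 1 - mu.colLen l))
        - ((mu.parts k : ℤ) + mu.colLen l - k - l - 1) := by
      linear_combination hh
    rw [heq]
    exact dvd_sub (dvd_add d1 d2) d3
  have hcastg : ((lam.hookLen i m : ℕ) : ℤ) = (lam.parts i : ℤ) + k - i - m - 1 := by
    simp only [Partition'.hookLen, hcol]
    omega
  have : (e : ℤ) ∣ ((lam.hookLen i m : ℕ) : ℤ) := by
    rw [hcastg]
    exact dG
  exact_mod_cast this
end
end
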